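/- arXiv:1706.02860 — 5 statements merged into one kernel-verified Lean document; each statement's English description precedes it below -/
import Mathlib

section
/- Let R be a principal ideal domain, M a free R-module of rank n, and φ : M → M an R-linear endomorphism. Then for every k with 1 ≤ k ≤ n, the determinant of the induced map ⋀^k(φ) : ⋀^k(M) → ⋀^k(M) equals det(φ)^(binom(n-1, k-1)). -/
/-- The `R`-linear map `⋀^k(f) : ⋀^k(M) → ⋀^k(N)` induced by an `R`-linear map `f : M → N`,
with `⋀^k(f)(m₁ ∧ ⋯ ∧ m_k) = f(m₁) ∧ ⋯ ∧ f(m_k)`. -/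
noncomputable def exteriorPowerMap {R M N : Type*} [CommRing R] [AddCommGroup M] [Module R M]
    [AddCommGroup N] [Module R N] (k : ℕ) (f : M →ₗ[R] N) : ⋀[R]^k M →ₗ[R] ⋀[R]^k N :=
  LinearMap.restrict (ExteriorAlgebra.map f).toLinearMap (p := ⋀[R]^k M) (q := ⋀[R]^k N)
    (fun x hx => by
      have h1 : Submodule.map (ExteriorAlgebra.map f).toLinearMap (⋀[R]^k M) ≤ ⋀[R]^k N := by
        rw [Submodule.map_pow]
        refine pow_le_pow_left' ?_ k
        rw [ExteriorAlgebra.ι_range_map_map]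
        exact LinearMap.map_le_range
      exact h1 (Submodule.mem_map_of_mem hx))

open ExteriorAlgebra Finset Matrix

namespace DetExtAux

variable {R : Type*} [CommRing R] {M : Type*} [AddCommGroup M] [Module R M]
variable {n k : ℕ}

abbrev SS (n k : ℕ) := {s : Finset (Fin n) // s.card = k}

def emb (s : SS n k) : Fin k → Fin n := fun i => (s.1.orderIsoOfFin s.2 i : Fin n)

lemma emb_strictMono (s : SS n k) : StrictMono (emb s) :=
  fun _ _ h => (s.1.orderIsoOfFin s.2).lt_iff_lt.2 h

lemma emb_injective (s : SS n k) : Function.Injective (emb s) :=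
  (emb_strictMono s).injective

lemma emb_mem (s : SS n k) (i : Fin k) : emb s i ∈ s.1 :=
  (s.1.orderIsoOfFin s.2 i).2

lemma emb_surj (s : SS n k) {x : Fin n} (hx : x ∈ s.1) : ∃ i, emb s i = x :=
  ⟨(s.1.orderIsoOfFin s.2).symm ⟨x, hx⟩, by
    simp [emb]⟩

def minorMatrix (k : ℕ) (A : Matrix (Fin n) (Fin n) R) : Matrix (SS n k) (SS n k) R :=
  fun s t => (A.submatrix (emb s) (emb t)).det

variable (b : Module.Basis (Fin n) R M)

noncomputable def wedgeAmb (s : SS n k) : ExteriorAlgebra R M := ιMulti R k (b ∘ emb s)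

lemma wedgeAmb_mem (s : SS n k) : wedgeAmb b s ∈ ⋀[R]^k M :=
  ιMulti_range R k ⟨_, rfl⟩

noncomputable def wedge (s : SS n k) : ⋀[R]^k M := ⟨wedgeAmb b s, wedgeAmb_mem b s⟩

noncomputable def coordA (s : SS n k) : M [⋀^Fin k]→ₗ[R] R :=
  Matrix.detRowAlternating.compLinearMap (LinearMap.pi fun i => b.coord (emb s i))

noncomputable def coordL (s : SS n k) : ExteriorAlgebra R M →ₗ[R] R :=
  liftAlternating (Pi.single (M := fun i => M [⋀^Fin i]→ₗ[R] R) k (coordA b s))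

lemma coordL_ιMulti (s : SS n k) (v : Fin k → M) :
    coordL b s (ιMulti R k v) = (Matrix.of fun i j => b.repr (v i) (emb s j)).det := by
  rw [coordL, liftAlternating_apply_ιMulti, Pi.single_eq_same]
  rfl

lemma coordL_wedge (s t : SS n k) :
    coordL b s (wedgeAmb b t) = if s = t then 1 else 0 := by
  rw [wedgeAmb, coordL_ιMulti]
  simp only [Function.comp_apply]
  rcases eq_or_ne s t with rfl | hst
  · simp only [if_pos rfl]
    have : (Matrix.of fun i j => b.repr (b (emb s i)) (emb s j)) = (1 : Matrix (Fin k) (Fin k) R) := by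
      ext i j
      simp [Module.Basis.repr_self, Finsupp.single_apply, Matrix.one_apply, (emb_injective s).eq_iff,
        eq_comm]
    rw [this, Matrix.det_one]; simp
  · rw [if_neg hst]
    -- find an element of t not in s
    have hts : ¬ t.1 ⊆ s.1 := by
      intro h
      exact hst (Subtype.ext (Finset.eq_of_subset_of_card_le h (by rw [s.2, t.2])).symm)
    obtain ⟨x, hxt, hxs⟩ := Finset.not_subset.1 hts
    obtain ⟨i, rfl⟩ := emb_surj t hxt
    apply Matrix.det_eq_zero_of_row_eq_zero i
    intro j
    have : emb t i ≠ emb s j := fun h => hxs (h ▸ emb_mem s j)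
    simp [Module.Basis.repr_self, Finsupp.single_apply, this]

-- the permutation lemma
lemma exists_perm {r : Fin k → Fin n} (hr : Function.Injective r) :
    ∃ (S : SS n k) (σ : Equiv.Perm (Fin k)), ∀ i, emb S (σ i) = r i := by
  refine ⟨⟨Finset.image r Finset.univ, by
    rw [Finset.card_image_of_injective _ hr, Finset.card_univ, Fintype.card_fin]⟩, ?_⟩
  set S : SS n k := ⟨Finset.image r Finset.univ, _⟩ with hS
  have hmem : ∀ i, r i ∈ S.1 := fun i => Finset.mem_image_of_mem _ (Finset.mem_univ i)
  let σ₀ : Fin k → Fin k := fun i => (S.1.orderIsoOfFin S.2).symm ⟨r i, hmem i⟩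
  have hσ₀ : Function.Injective σ₀ := by
    intro i j h
    apply hr
    have := congrArg (S.1.orderIsoOfFin S.2) h
    simp only [σ₀, OrderIso.apply_symm_apply] at this
    exact congrArg Subtype.val this
  refine ⟨Equiv.ofBijective σ₀ ((Finite.injective_iff_bijective).1 hσ₀), fun i => ?_⟩
  show (S.1.orderIsoOfFin S.2 (σ₀ i) : Fin n) = r i
  simp [σ₀]

lemma span_wedge :
    (⊤ : Submodule R (⋀[R]^k M)) ≤ Submodule.span R (Set.range (wedge b)) := by
  rintro ⟨x, hx⟩ -
  have hx' : x ∈ Submodule.span R (Set.range (ιMulti R k (M := M))) := by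
    rwa [ιMulti_span_fixedDegree]
  set T : Submodule R (ExteriorAlgebra R M) :=
    Submodule.map (⋀[R]^k M).subtype (Submodule.span R (Set.range (wedge b))) with hT
  have key : Submodule.span R (Set.range (ιMulti R k (M := M))) ≤ T := by
    rw [Submodule.span_le]
    rintro _ ⟨v, rfl⟩
    have hv : (ιMulti R k v : ExteriorAlgebra R M)
        = ∑ r : Fin k → Fin n, (∏ i, b.repr (v i) (r i)) • ιMulti R k (b ∘ r) := by
      have expand : ιMulti R k v
          = (ιMulti R k (M := M)) (fun i => ∑ j, b.repr (v i) j • b j) := by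
        congr 1
        funext i
        exact (b.sum_repr (v i)).symm
      rw [expand]
      rw [show ((ιMulti R k (M := M)) (fun i => ∑ j, b.repr (v i) j • b j))
          = (ιMulti R k (M := M)).toMultilinearMap (fun i => ∑ j, b.repr (v i) j • b j) from rfl]
      rw [MultilinearMap.map_sum]
      refine Finset.sum_congr rfl fun r _ => ?_
      rw [MultilinearMap.map_smul_univ]
      rfl
    rw [hv]
    apply Submodule.sum_mem
    intro r _
    apply Submodule.smul_mem
    by_cases hr : Function.Injective r
    · obtain ⟨S, σ, hσ⟩ := exists_perm hr
      have : b ∘ r = (b ∘ emb S) ∘ σ := by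
        funext i; simp [Function.comp, hσ]
      rw [this, AlternatingMap.map_perm]
      have hw : wedgeAmb b S ∈ T := by
        exact ⟨wedge b S, Submodule.subset_span ⟨S, rfl⟩, rfl⟩
      rcases Int.units_eq_one_or (Equiv.Perm.sign σ) with h | h <;> rw [h]
      · simpa [wedgeAmb] using hw
      · have : ((-1 : ℤˣ) • (ιMulti R k (b ∘ emb S)) : ExteriorAlgebra R M)
            = -(ιMulti R k (b ∘ emb S)) := by
          simp [Units.smul_def]
        rw [this]
        exact T.neg_mem hw
    · have : ¬ Function.Injective (b ∘ r) := fun h => hr (Function.Injective.of_comp h)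
      rw [AlternatingMap.map_eq_zero_of_not_injective _ _ this]
      exact T.zero_mem
  obtain ⟨y, hy, hyx⟩ := key hx'
  have : y = ⟨x, hx⟩ := Subtype.ext hyx
  rwa [this] at hy

-- chunk 3: independence, basis, repr
lemma li_wedge : LinearIndependent R (wedge (k := k) b) := by
  rw [Fintype.linearIndependent_iff]
  intro g hg s
  have h0 : ((∑ t, g t • wedge b t : ⋀[R]^k M) : ExteriorAlgebra R M) = 0 := by
    rw [hg]; rfl
  have h1 : (∑ t, g t • wedgeAmb b t) = (0 : ExteriorAlgebra R M) := by
    simpa [wedge] using h0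
  have := congrArg (coordL b s) h1
  simpa [map_sum, coordL_wedge, Finset.sum_ite_eq] using this

noncomputable def wedgeBasis : Module.Basis (SS n k) R (⋀[R]^k M) :=
  Module.Basis.mk (li_wedge b) (span_wedge b)

lemma wedgeBasis_repr (x : ⋀[R]^k M) (s : SS n k) :
    (wedgeBasis (k := k) b).repr x s = coordL b s (x : ExteriorAlgebra R M) := by
  have : (Finsupp.lapply s) ∘ₗ ((wedgeBasis (k := k) b).repr : ⋀[R]^k M →ₗ[R] (SS n k →₀ R))
      = (coordL b s) ∘ₗ (⋀[R]^k M).subtype := by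
    apply (wedgeBasis (k := k) b).ext
    intro t
    simp only [LinearMap.comp_apply, Module.Basis.repr_self, Finsupp.lapply_apply,
      Finsupp.single_apply, Submodule.subtype_apply]
    rw [show ((wedgeBasis (k := k) b) t : ExteriorAlgebra R M) = wedgeAmb b t by
      rw [wedgeBasis, Module.Basis.mk_apply]; rfl]
    rw [coordL_wedge]
    simp [Finsupp.single_apply, eq_comm]
  exact congrArg (fun f => f x) (congrArg DFunLike.coe this)



lemma coe_exteriorPowerMap {N : Type*} [AddCommGroup N] [Module R N] (f : M →ₗ[R] N)
    (x : ⋀[R]^k M) :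
    (exteriorPowerMap k f x : ExteriorAlgebra R N)
      = ExteriorAlgebra.map f (x : ExteriorAlgebra R M) := rfl

lemma exteriorPowerMap_comp {N P : Type*} [AddCommGroup N] [Module R N] [AddCommGroup P]
    [Module R P] (f : N →ₗ[R] P) (g : M →ₗ[R] N) :
    exteriorPowerMap k (f ∘ₗ g) = (exteriorPowerMap k f) ∘ₗ (exteriorPowerMap (R := R) k g) := by
  apply LinearMap.ext
  intro x
  apply Subtype.ext
  rw [LinearMap.comp_apply]
  rw [coe_exteriorPowerMap, coe_exteriorPowerMap, coe_exteriorPowerMap]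
  rw [← ExteriorAlgebra.map_comp_map]
  rfl

lemma toMatrix_exteriorPowerMap (φ : M →ₗ[R] M) :
    LinearMap.toMatrix (wedgeBasis (k := k) b) (wedgeBasis (k := k) b) (exteriorPowerMap k φ)
      = minorMatrix k (LinearMap.toMatrix b b φ) := by
  ext s t
  rw [LinearMap.toMatrix_apply, wedgeBasis_repr, coe_exteriorPowerMap]
  rw [show ((wedgeBasis (k := k) b) t : ExteriorAlgebra R M) = wedgeAmb b t by
    rw [wedgeBasis, Module.Basis.mk_apply]; rfl]
  rw [wedgeAmb, ExteriorAlgebra.map_apply_ιMulti, coordL_ιMulti]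
  rw [minorMatrix, ← Matrix.det_transpose]
  congr 1
  ext i j
  simp [Matrix.transpose_apply, Matrix.submatrix_apply, LinearMap.toMatrix_apply,
    Function.comp_apply]

lemma minorMatrix_mul (A B : Matrix (Fin n) (Fin n) R) :
    minorMatrix k (A * B) = minorMatrix k A * minorMatrix k B := by
  classical
  let b : Module.Basis (Fin n) R (Fin n → R) := Pi.basisFun R (Fin n)
  have h1 : ∀ C : Matrix (Fin n) (Fin n) R,
      LinearMap.toMatrix (wedgeBasis (k := k) b) (wedgeBasis (k := k) b)
        (exteriorPowerMap k (Matrix.toLin b b C)) = minorMatrix k C := by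
    intro C
    rw [toMatrix_exteriorPowerMap, LinearMap.toMatrix_toLin]
  calc minorMatrix k (A * B)
      = LinearMap.toMatrix (wedgeBasis (k := k) b) (wedgeBasis (k := k) b)
        (exteriorPowerMap k (Matrix.toLin b b (A * B))) := (h1 _).symm
    _ = minorMatrix k A * minorMatrix k B := by
        rw [Matrix.toLin_mul b b b, exteriorPowerMap_comp, LinearMap.toMatrix_comp _
          (wedgeBasis (k := k) b), h1, h1]


section Triangular

def wt (s : SS n k) : ℕ := ∑ i, 2 ^ ((emb s i : Fin n) : ℕ)

lemma minor_support {A : Matrix (Fin n) (Fin n) R} (hA : A.BlockTriangular id) {s t : SS n k}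
    (h : minorMatrix k A s t ≠ 0) :
    ∃ σ : Equiv.Perm (Fin k), ∀ i, emb s (σ i) ≤ emb t i := by
  obtain ⟨σ, hσ⟩ : ∃ σ : Equiv.Perm (Fin k),
      ∀ i, (A.submatrix (emb s) (emb t)) (σ i) i ≠ 0 := by
    by_contra hc
    push_neg at hc
    apply h
    rw [minorMatrix, Matrix.det_apply]
    apply Finset.sum_eq_zero
    intro σ _
    obtain ⟨i, hi⟩ := hc σ
    have hz : (∏ j, A.submatrix (emb s) (emb t) (σ j) j) = 0 :=
      Finset.prod_eq_zero (Finset.mem_univ i) hi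
    rw [hz, smul_zero]
  refine ⟨σ, fun i => ?_⟩
  by_contra hle
  push_neg at hle
  exact hσ i (hA hle)

lemma wt_lt_or_eq {A : Matrix (Fin n) (Fin n) R} (hA : A.BlockTriangular id) {s t : SS n k}
    (h : minorMatrix k A s t ≠ 0) : wt s < wt t ∨ s = t := by
  obtain ⟨σ, hσ⟩ := minor_support hA h
  have hle : ∀ i, 2 ^ ((emb s (σ i) : Fin n) : ℕ) ≤ 2 ^ ((emb t i : Fin n) : ℕ) := fun i =>
    Nat.pow_le_pow_right (by norm_num) (hσ i)
  have hsum : wt s = ∑ i, 2 ^ ((emb s (σ i) : Fin n) : ℕ) := (Equiv.sum_comp σ _).symm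
  have hws : wt s ≤ wt t := by
    rw [hsum]; exact Finset.sum_le_sum fun i _ => hle i
  rcases lt_or_eq_of_le hws with h' | h'
  · exact Or.inl h'
  · right
    rw [hsum] at h'
    have heq := (Finset.sum_eq_sum_iff_of_le fun i _ => hle i).1 h'
    have hemb : ∀ i, emb s (σ i) = emb t i := by
      intro i
      have := heq i (Finset.mem_univ i)
      have := Nat.pow_right_injective (le_refl 2) this
      exact Fin.ext this
    apply Subtype.ext
    apply Finset.eq_of_subset_of_card_le
    · intro x hx
      obtain ⟨i, rfl⟩ := emb_surj s hx
      obtain ⟨j, rfl⟩ := σ.surjective i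
      rw [hemb j]
      exact emb_mem t j
    · rw [s.2, t.2]

lemma det_minor_blockTriangular {A : Matrix (Fin n) (Fin n) R} (hA : A.BlockTriangular id) :
    (minorMatrix k A).det = ∏ s : SS n k, ∏ x ∈ s.1, A x x := by
  classical
  have hdiag : ∀ s : SS n k, minorMatrix k A s s = ∏ x ∈ s.1, A x x := by
    intro s
    have htri2 : (A.submatrix (emb s) (emb s)).BlockTriangular id :=
      fun i j hij => hA (emb_strictMono s hij)
    rw [minorMatrix, Matrix.det_of_upperTriangular htri2]
    exact Finset.prod_bij (fun i _ => emb s i) (fun i _ => emb_mem s i)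
      (fun i _ j _ h => emb_injective s h)
      (fun x hx => by obtain ⟨i, rfl⟩ := emb_surj s hx; exact ⟨i, Finset.mem_univ i, rfl⟩)
      (fun i _ => rfl)
  set N := Fintype.card (SS n k) with hN
  let e := Fintype.equivFin (SS n k)
  let key : SS n k → ℕ := fun s => (e s).val + wt s * N
  have keyinj : Function.Injective key := by
    intro s t h
    have h2 := congrArg (fun x => x % N) h
    simp only [key, Nat.add_mul_mod_self_right, Nat.mod_eq_of_lt (e s).isLt,
      Nat.mod_eq_of_lt (e t).isLt] at h2
    exact e.injective (Fin.ext (by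
      rwa [Nat.mod_eq_of_lt (show (e s).val < N from (e s).isLt),
        Nat.mod_eq_of_lt (show (e t).val < N from (e t).isLt)] at h2))
  have keymono : ∀ {s t : SS n k}, wt s < wt t → key s < key t := by
    intro s t h
    show (e s).val + wt s * N < (e t).val + wt t * N
    have h1 : (e s).val < N := (e s).isLt
    nlinarith [Nat.zero_le (e t).val]
  have htri : (minorMatrix k A).BlockTriangular key := by
    intro s t hlt
    by_contra hne0
    rcases wt_lt_or_eq hA hne0 with h' | h'
    · exact absurd (keymono h') (lt_asymm hlt)
    · subst h'; exact lt_irrefl _ hlt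
  rw [htri.det]
  rw [Finset.prod_image (fun x _ y _ h => keyinj h)]
  refine Finset.prod_congr rfl fun s _ => ?_
  letI : Unique {t // key t = key s} := ⟨⟨⟨s, rfl⟩⟩, fun t => Subtype.ext (keyinj t.2)⟩
  rw [Matrix.det_unique]
  have hd : (default : {t // key t = key s}) = ⟨s, rfl⟩ := rfl
  rw [Matrix.toSquareBlock_def, hd]
  exact hdiag s

end Triangular


section Counting

lemma card_filter_mem (hk : 1 ≤ k) (i : Fin n) :
    ((Finset.powersetCard k (Finset.univ : Finset (Fin n))).filter (fun s => i ∈ s)).card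
      = (n - 1).choose (k - 1) := by
  classical
  have h2 : (n - 1).choose (k - 1)
      = (Finset.powersetCard (k - 1) ((Finset.univ : Finset (Fin n)).erase i)).card := by
    rw [Finset.card_powersetCard, Finset.card_erase_of_mem (Finset.mem_univ i),
      Finset.card_univ, Fintype.card_fin]
  rw [h2]
  refine Finset.card_bij' (fun s _ => s.erase i) (fun t _ => insert i t) ?_ ?_ ?_ ?_
  · intro s hs
    rw [Finset.mem_filter, Finset.mem_powersetCard_univ] at hs
    rw [Finset.mem_powersetCard]
    refine ⟨fun x hx => ?_, by rw [Finset.card_erase_of_mem hs.2, hs.1]⟩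
    rw [Finset.mem_erase] at hx ⊢
    exact ⟨hx.1, Finset.mem_univ _⟩
  · intro t ht
    rw [Finset.mem_powersetCard] at ht
    have hit : i ∉ t := fun h => by
      have := ht.1 h
      exact (Finset.mem_erase.1 this).1 rfl
    rw [Finset.mem_filter, Finset.mem_powersetCard_univ]
    refine ⟨?_, Finset.mem_insert_self _ _⟩
    rw [Finset.card_insert_of_notMem hit, ht.2]
    omega
  · intro s hs
    rw [Finset.mem_filter] at hs
    exact Finset.insert_erase hs.2
  · intro t ht
    rw [Finset.mem_powersetCard] at ht
    have hit : i ∉ t := fun h => (Finset.mem_erase.1 (ht.1 h)).1 rfl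
    exact Finset.erase_insert hit

lemma prod_prod (hk : 1 ≤ k) (x : Fin n → R) :
    ∏ s : SS n k, ∏ j ∈ s.1, x j = (∏ j, x j) ^ (n - 1).choose (k - 1) := by
  classical
  have h1 : ∏ s : SS n k, ∏ j ∈ s.1, x j
      = ∏ s ∈ Finset.powersetCard k (Finset.univ : Finset (Fin n)), ∏ j ∈ s, x j :=
    (Finset.prod_subtype _ (fun s => Finset.mem_powersetCard_univ)
      (fun s => ∏ j ∈ s, x j)).symm
  rw [h1]
  rw [Finset.prod_comm' (t' := Finset.univ)
    (s' := fun j => (Finset.powersetCard k (Finset.univ : Finset (Fin n))).filter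
      (fun s => j ∈ s)) (h := fun s j => by simp [Finset.mem_filter, and_comm])]
  rw [← Finset.prod_pow]
  refine Finset.prod_congr rfl fun j _ => ?_
  rw [Finset.prod_const, card_filter_mem hk]

end Counting

section FieldCase

lemma minorMatrix_transpose (A : Matrix (Fin n) (Fin n) R) :
    minorMatrix k Aᵀ = (minorMatrix k A)ᵀ := by
  ext s t
  show ((Aᵀ).submatrix (emb s) (emb t)).det = (A.submatrix (emb t) (emb s)).det
  rw [show (Aᵀ).submatrix (emb s) (emb t) = (A.submatrix (emb t) (emb s))ᵀ from rfl,
    Matrix.det_transpose]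

lemma transvection_blockTriangular {i j : Fin n} (hij : i < j) (c : R) :
    (Matrix.transvection i j c).BlockTriangular id := by
  intro a b hab
  rw [Matrix.transvection, Matrix.add_apply]
  rw [Matrix.one_apply_ne (fun h => by exact absurd (h ▸ hab) (lt_irrefl _))]
  rw [Matrix.single_apply_of_ne]
  · ring
  · rintro ⟨rfl, rfl⟩
    exact absurd hab (not_lt.2 hij.le)

lemma transvection_diag {i j : Fin n} (hij : i ≠ j) (c : R) (a : Fin n) :
    Matrix.transvection i j c a a = 1 := by
  rw [Matrix.transvection, Matrix.add_apply, Matrix.one_apply_eq,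
    Matrix.single_apply_of_ne]
  · ring
  · rintro ⟨rfl, rfl⟩
    exact hij rfl

lemma det_minor_of_triangular {A : Matrix (Fin n) (Fin n) R} (hk : 1 ≤ k)
    (hA : A.BlockTriangular id) :
    (minorMatrix k A).det = (∏ x, A x x) ^ (n - 1).choose (k - 1) := by
  rw [det_minor_blockTriangular hA, prod_prod hk]

theorem det_minor_field {K : Type*} [Field K] (hk : 1 ≤ k) (A : Matrix (Fin n) (Fin n) K) :
    (minorMatrix k A).det = A.det ^ (n - 1).choose (k - 1) := by
  classical
  refine Matrix.diagonal_transvection_induction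
    (fun B => (minorMatrix k B).det = B.det ^ (n - 1).choose (k - 1)) A
    (fun D _ => ?_) (fun t => ?_) (fun B C hB hC => ?_)
  · show (minorMatrix k (Matrix.diagonal D)).det = (Matrix.diagonal D).det ^ (n - 1).choose (k - 1)
    rw [det_minor_of_triangular hk (Matrix.blockTriangular_diagonal D), Matrix.det_diagonal]
    congr 1
    exact Finset.prod_congr rfl fun x _ => Matrix.diagonal_apply_eq D x
  · rcases t with ⟨i, j, hij, c⟩
    show (minorMatrix k (Matrix.transvection i j c)).det
      = (Matrix.transvection i j c).det ^ (n - 1).choose (k - 1)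
    rw [Matrix.det_transvection_of_ne i j hij c]
    rcases hij.lt_or_gt with h | h
    · rw [det_minor_of_triangular hk (transvection_blockTriangular h c)]
      rw [Finset.prod_congr rfl fun x _ => transvection_diag hij c x]
      simp
    · have htr : (Matrix.transvection i j c)ᵀ = Matrix.transvection j i c := by
        rw [Matrix.transvection, Matrix.transvection, Matrix.transpose_add,
          Matrix.transpose_one]
        congr 1
        ext a b
        simp [Matrix.transpose_apply, Matrix.single, and_comm]
      have h1 : (minorMatrix k ((Matrix.transvection i j c)ᵀ)).det
          = ((minorMatrix k (Matrix.transvection i j c))ᵀ).det := by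
        rw [minorMatrix_transpose]
      rw [Matrix.det_transpose] at h1
      rw [← h1, htr, det_minor_of_triangular hk (transvection_blockTriangular h c)]
      rw [Finset.prod_congr rfl fun x _ => transvection_diag (Ne.symm hij) c x]
      simp
  · show (minorMatrix k (B * C)).det = (B * C).det ^ (n - 1).choose (k - 1)
    rw [minorMatrix_mul, Matrix.det_mul, hB, hC, Matrix.det_mul, mul_pow]

end FieldCase

section RingCase

lemma minorMatrix_map {S : Type*} [CommRing S] (f : R →+* S) (A : Matrix (Fin n) (Fin n) R) :
    minorMatrix k (A.map f) = (minorMatrix k A).map f := by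
  ext s t
  show ((A.map f).submatrix (emb s) (emb t)).det = f ((A.submatrix (emb s) (emb t)).det)
  rw [RingHom.map_det]
  rfl

theorem det_minor_comm {S : Type*} [CommRing S] (hk : 1 ≤ k) (A : Matrix (Fin n) (Fin n) S) :
    (minorMatrix k A).det = A.det ^ (n - 1).choose (k - 1) := by
  classical
  let D := MvPolynomial (Fin n × Fin n) ℤ
  let K := FractionRing D
  let X : Matrix (Fin n) (Fin n) D := Matrix.of fun i j => MvPolynomial.X (i, j)
  have hfield := det_minor_field (K := K) hk (X.map (algebraMap D K))
  rw [minorMatrix_map (algebraMap D K) X] at hfield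
  rw [show (minorMatrix k X).map (algebraMap D K)
      = (algebraMap D K).mapMatrix (minorMatrix k X) from rfl] at hfield
  rw [show X.map (algebraMap D K) = (algebraMap D K).mapMatrix X from rfl] at hfield
  rw [← RingHom.map_det, ← RingHom.map_det, ← map_pow] at hfield
  have hD : (minorMatrix k X).det = X.det ^ (n - 1).choose (k - 1) :=
    IsFractionRing.injective D K hfield
  let φ : D →+* S := MvPolynomial.eval₂Hom (Int.castRingHom S) (fun p => A p.1 p.2)
  have hX : X.map φ = A := by
    ext i j
    exact MvPolynomial.eval₂Hom_X' _ _ _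
  have hφ := congrArg φ hD
  rw [map_pow, RingHom.map_det, RingHom.map_det] at hφ
  rw [show φ.mapMatrix (minorMatrix k X) = (minorMatrix k X).map φ from rfl,
    show φ.mapMatrix X = X.map φ from rfl, ← minorMatrix_map, hX] at hφ
  exact hφ

end RingCase

end DetExtAux

/-- Let `R` be a principal ideal domain, `M` a free `R`-module of rank `n`, and `φ : M → M` an
`R`-linear endomorphism.  Then for every `k` with `1 ≤ k ≤ n`, the determinant of the induced map
`⋀^k(φ) : ⋀^k(M) → ⋀^k(M)` equals `det(φ) ^ (n-1).choose (k-1)`. -/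
theorem det_exteriorPowerMap {R M : Type*} [CommRing R] [IsDomain R] [IsPrincipalIdealRing R]
    [AddCommGroup M] [Module R M] [Module.Free R M] [Module.Finite R M]
    (n : ℕ) (hn : Module.finrank R M = n) (φ : M →ₗ[R] M)
    (k : ℕ) (hk1 : 1 ≤ k) (hk2 : k ≤ n) :
    LinearMap.det (exteriorPowerMap k φ) = (LinearMap.det φ) ^ Nat.choose (n - 1) (k - 1) := by
  classical
  have hcard : Fintype.card (Module.Free.ChooseBasisIndex R M) = n := by
    rw [← Module.finrank_eq_card_chooseBasisIndex, hn]
  let b : Module.Basis (Fin n) R M :=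
    (Module.Free.chooseBasis R M).reindex (Fintype.equivFinOfCardEq hcard)
  rw [← LinearMap.det_toMatrix (DetExtAux.wedgeBasis (k := k) b),
    DetExtAux.toMatrix_exteriorPowerMap, DetExtAux.det_minor_comm hk1,
    LinearMap.det_toMatrix]
end

section
/- Let R be a principal ideal domain in which every proper quotient ring is finite, and let M and N be free R-modules of rank n with N ⊆ M and [M : N] finite. Then for every 1 ≤ k ≤ n, the index of ⋀^k(N) in ⋀^k(M) equals [M : N]^(binom(n-1, k-1)). -/
section WedgeBasis


open ExteriorAlgebra Finset Module

variable {R M : Type*} [CommRing R] [AddCommGroup M] [Module R M]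

variable (R) in
/-- The family of wedge products of basis vectors, indexed by `k`-element subsets. -/
noncomputable def wedgeFamily {n k : ℕ} (b : Basis (Fin n) R M)
    (S : {s : Finset (Fin n) // s.card = k}) : ⋀[R]^k M :=
  ⟨ιMulti R k (fun i => b (S.1.orderIsoOfFin S.2 i)),
    ιMulti_range R k (Set.mem_range_self _)⟩

@[simp] lemma wedgeFamily_coe {n k : ℕ} (b : Basis (Fin n) R M)
    (S : {s : Finset (Fin n) // s.card = k}) :
    (wedgeFamily R b S : ExteriorAlgebra R M) =
      ιMulti R k (fun i => b (S.1.orderIsoOfFin S.2 i)) := rfl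

/-- The "determinant of coordinates over `T`" alternating form. -/
noncomputable def dualForm {n : ℕ} (b : Basis (Fin n) R M) (k : ℕ)
    (T : {s : Finset (Fin n) // s.card = k}) : M [⋀^Fin k]→ₗ[R] R :=
  Matrix.detRowAlternating.compLinearMap
    (LinearMap.pi (fun i => b.coord (T.1.orderIsoOfFin T.2 i)))

lemma dualForm_apply_wedge {n k : ℕ} (b : Basis (Fin n) R M)
    (S T : {s : Finset (Fin n) // s.card = k}) :
    dualForm b k T (fun i => b (S.1.orderIsoOfFin S.2 i)) = if S = T then 1 else 0 := by
  rw [dualForm]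
  simp only [AlternatingMap.compLinearMap_apply]
  have hentry : (fun i => LinearMap.pi (R := R)
      (fun j => b.coord (T.1.orderIsoOfFin T.2 j)) (b (S.1.orderIsoOfFin S.2 i)))
      = Matrix.of (fun i j =>
        if (S.1.orderIsoOfFin S.2 i : Fin n) = (T.1.orderIsoOfFin T.2 j : Fin n)
        then (1 : R) else 0) := by
    funext i j
    simp [LinearMap.pi_apply, Basis.coord_apply, Basis.repr_self, Finsupp.single_apply, eq_comm]
    congr
  rw [hentry]
  change Matrix.det _ = _
  by_cases h : S = T
  · subst h
    rw [if_pos rfl]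
    have : (Matrix.of (fun i j =>
        if (S.1.orderIsoOfFin S.2 i : Fin n) = (S.1.orderIsoOfFin S.2 j : Fin n)
        then (1 : R) else 0)) = 1 := by
      ext i j
      rw [Matrix.of_apply, Matrix.one_apply]
      by_cases hij : i = j
      · simp [hij]
      · rw [if_neg hij, if_neg]
        intro hc
        exact hij ((S.1.orderIsoOfFin S.2).injective (Subtype.ext hc))
    rw [this, Matrix.det_one]
  · rw [if_neg h]
    have hts : ∃ t ∈ T.1, t ∉ S.1 := by
      by_contra hc
      push_neg at hc
      exact h (Subtype.ext (Finset.eq_of_subset_of_card_le hc (by rw [S.2, T.2])).symm)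
    obtain ⟨t, htT, htS⟩ := hts
    obtain ⟨j0, hj0⟩ : ∃ j0, (T.1.orderIsoOfFin T.2 j0 : Fin n) = t := by
      obtain ⟨j0, hj⟩ := (T.1.orderIsoOfFin T.2).surjective ⟨t, htT⟩
      exact ⟨j0, by rw [hj]⟩
    apply Matrix.det_eq_zero_of_column_eq_zero j0
    intro i
    rw [Matrix.of_apply, if_neg]
    rw [hj0]
    intro hc
    exact htS (hc ▸ (S.1.orderIsoOfFin S.2 i).2)

noncomputable def dualLift {n : ℕ} (b : Basis (Fin n) R M) (k : ℕ)
    (T : {s : Finset (Fin n) // s.card = k}) : ExteriorAlgebra R M →ₗ[R] R :=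
  ExteriorAlgebra.liftAlternating
    (Function.update (0 : ∀ i, M [⋀^Fin i]→ₗ[R] R) k (dualForm b k T))

lemma dualLift_wedge {n k : ℕ} (b : Basis (Fin n) R M)
    (S T : {s : Finset (Fin n) // s.card = k}) :
    dualLift b k T (wedgeFamily R b S : ExteriorAlgebra R M) = if S = T then 1 else 0 := by
  rw [dualLift, wedgeFamily_coe, ExteriorAlgebra.liftAlternating_apply_ιMulti,
    Function.update_self, dualForm_apply_wedge]

lemma wedgeFamily_linearIndependent {n k : ℕ} (b : Basis (Fin n) R M) :
    LinearIndependent R (wedgeFamily R b (k := k)) := by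
  have h : LinearIndependent R (fun S => (wedgeFamily R b (k := k) S : ExteriorAlgebra R M)) := by
    rw [Fintype.linearIndependent_iff]
    intro g hg T
    have := congrArg (dualLift b k T) hg
    rw [map_sum, map_zero] at this
    simp only [map_smul, dualLift_wedge, smul_eq_mul, mul_ite, mul_one, mul_zero] at this
    rwa [Finset.sum_ite_eq' Finset.univ T g, if_pos (Finset.mem_univ T)] at this
  exact h.of_comp (Submodule.subtype _)

lemma ιMulti_comp_mem_span {n k : ℕ} (b : Basis (Fin n) R M) (r : Fin k → Fin n) :
    ιMulti R k (fun i => b (r i)) ∈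
      Submodule.span R (Set.range (fun S => (wedgeFamily R b (k := k) S : ExteriorAlgebra R M))) := by
  by_cases hr : Function.Injective r
  · -- image is a k-subset
    classical
    set S : Finset (Fin n) := Finset.univ.image r with hS
    have hcard : S.card = k := by
      rw [hS, Finset.card_image_of_injective _ hr, Finset.card_univ, Fintype.card_fin]
    have hrange : Set.range r = (S : Set (Fin n)) := by
      rw [hS]; ext x; simp
    let e1 : Fin k ≃ {x // x ∈ S} :=
      (Equiv.ofInjective r hr).trans (Equiv.setCongr hrange)
    let σ : Fin k ≃ Fin k := e1.trans (S.orderIsoOfFin hcard).toEquiv.symm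
    have hcomp : ∀ i, (S.orderIsoOfFin hcard (σ i) : Fin n) = r i := by
      intro i
      have h2 : (S.orderIsoOfFin hcard) (σ i) = e1 i :=
        Equiv.apply_symm_apply (S.orderIsoOfFin hcard).toEquiv (e1 i)
      rw [h2]; rfl
    have : (fun i => b (r i)) = (fun i => b (S.orderIsoOfFin hcard i)) ∘ σ := by
      funext i
      rw [Function.comp_apply, ← hcomp i]
    rw [this, AlternatingMap.map_perm]
    refine Submodule.smul_of_tower_mem _ _ ?_
    exact Submodule.subset_span ⟨⟨S, hcard⟩, rfl⟩
  · rw [Function.not_injective_iff] at hr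
    obtain ⟨i, j, hij, hne⟩ := hr
    rw [AlternatingMap.map_eq_zero_of_eq _ _ (by rw [hij]) hne]
    exact Submodule.zero_mem _

lemma wedgeFamily_span {n k : ℕ} (b : Basis (Fin n) R M) :
    Submodule.span R (Set.range (fun S => (wedgeFamily R b (k := k) S : ExteriorAlgebra R M)))
      = ⋀[R]^k M := by
  refine le_antisymm (Submodule.span_le.2 ?_) ?_
  · rintro x ⟨S, rfl⟩
    exact (wedgeFamily R b S).2
  · refine le_trans (le_of_eq (ιMulti_span_fixedDegree R k).symm) (Submodule.span_le.2 ?_)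
    rintro x ⟨v, rfl⟩
    have hv : v = fun i => ∑ j, b.repr (v i) j • b j := by
      funext i
      rw [Basis.sum_repr]
    have hv2 : ιMulti R k v
        = (ιMulti R k).toMultilinearMap (fun i => ∑ j, b.repr (v i) j • b j) := by
      rw [← hv]; rfl
    rw [hv2]
    rw [(ιMulti R k).toMultilinearMap.map_sum]
    refine Submodule.sum_mem _ fun r _ => ?_
    have : (ιMulti R k).toMultilinearMap (fun i => b.repr (v i) (r i) • b (r i))
        = (∏ i, b.repr (v i) (r i)) • ιMulti R k (fun i => b (r i)) := by
      rw [MultilinearMap.map_smul_univ]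
      rfl
    rw [this]
    exact Submodule.smul_mem _ _ (ιMulti_comp_mem_span b r)

variable (R) in
noncomputable def wedgeBasis {n : ℕ} (b : Basis (Fin n) R M) (k : ℕ) :
    Basis {s : Finset (Fin n) // s.card = k} R (⋀[R]^k M) := by
  refine Basis.mk (wedgeFamily_linearIndependent b) ?_
  rw [← Submodule.map_le_map_iff_of_injective (Submodule.injective_subtype (⋀[R]^k M))]
  rw [Submodule.map_span, Submodule.map_top, Submodule.range_subtype]
  rw [← Set.range_comp]
  erw [wedgeFamily_span b]

@[simp] lemma wedgeBasis_apply {n k : ℕ} (b : Basis (Fin n) R M)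
    (S : {s : Finset (Fin n) // s.card = k}) :
    wedgeBasis R b k S = wedgeFamily R b S := by
  rw [wedgeBasis, Basis.mk_apply]

/-- Cardinality of the quotient of a free module by the span of scaled basis vectors. -/
lemma card_quot_span_smul {ι : Type*} [Fintype ι] [DecidableEq ι] (b : Basis ι R M) (c : ι → R) :
    Nat.card (M ⧸ Submodule.span R (Set.range fun i => c i • b i))
      = ∏ i, Nat.card (R ⧸ Ideal.span {c i}) := by
  classical
  set W := Submodule.span R (Set.range fun i => c i • b i) with hW
  let φ : M →ₗ[R] (∀ i, R ⧸ Ideal.span {c i}) :=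
    LinearMap.pi (fun i => (Ideal.span {c i}).mkQ ∘ₗ b.coord i)
  have hker : LinearMap.ker φ = W := by
    apply le_antisymm
    · intro x hx
      have hco : ∀ i, ∃ r, b.repr x i = c i * r := by
        intro i
        have : φ x i = 0 := by rw [hx]; rfl
        have h2 : (Ideal.span {c i}).mkQ (b.coord i x) = 0 := this
        rw [Submodule.mkQ_apply, Submodule.Quotient.mk_eq_zero, Ideal.mem_span_singleton] at h2
        obtain ⟨r, hr⟩ := h2
        exact ⟨r, hr⟩
      choose r hr using hco
      have hx2 : x = ∑ i, r i • (c i • b i) := by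
        conv_lhs => rw [← b.sum_repr x]
        refine Finset.sum_congr rfl fun i _ => ?_
        rw [hr i, smul_smul, mul_comm]
      rw [hx2]
      exact Submodule.sum_mem _ fun i _ =>
        Submodule.smul_mem _ _ (Submodule.subset_span ⟨i, rfl⟩)
    · rw [hW, Submodule.span_le]
      rintro x ⟨i, rfl⟩
      simp only [SetLike.mem_coe, LinearMap.mem_ker]
      ext j
      simp only [φ, LinearMap.pi_apply, LinearMap.comp_apply, map_smul, Basis.coord_apply,
        Basis.repr_self, Submodule.mkQ_apply, LinearMap.zero_apply, Pi.zero_apply]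
      rw [Finsupp.single_apply]
      by_cases hij : i = j
      · subst hij
        rw [if_pos rfl, ← Submodule.Quotient.mk_smul, smul_eq_mul, mul_one,
          Submodule.Quotient.mk_eq_zero]
        exact Ideal.mem_span_singleton_self _
      · simp [hij]
  have hsurj : Function.Surjective φ := by
    intro y
    have : ∀ i, ∃ r : R, (Ideal.span {c i}).mkQ r = y i :=
      fun i => Submodule.mkQ_surjective _ (y i)
    choose r hr using this
    refine ⟨∑ i, r i • b i, ?_⟩
    ext j
    simp only [φ, LinearMap.pi_apply, LinearMap.comp_apply, Basis.coord_apply]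
    rw [b.repr_sum_self]
    exact hr j
  have e := (LinearMap.quotKerEquivOfSurjective φ hsurj)
  rw [hker] at e
  rw [Nat.card_congr e.toEquiv, Nat.card_pi]
end WedgeBasis

section QuotCard
variable {R : Type*} [CommRing R] [IsDomain R]


lemma card_quot_span_mul (hfin : ∀ I : Ideal R, I ≠ ⊥ → Finite (R ⧸ I))
    (a b : R) (ha : a ≠ 0) (hb : b ≠ 0) :
    Nat.card (R ⧸ Ideal.span {a * b})
      = Nat.card (R ⧸ Ideal.span {a}) * Nat.card (R ⧸ Ideal.span {b}) := by
  have hab : a * b ≠ 0 := mul_ne_zero ha hb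
  have hle : Ideal.span {a * b} ≤ Ideal.span {a} :=
    Ideal.span_singleton_le_span_singleton.2 (Dvd.intro b rfl)
  let φ : (R ⧸ Ideal.span {a * b}) →ₗ[R] R ⧸ Ideal.span {a} :=
    Submodule.mapQ _ _ LinearMap.id (by simpa using hle)
  have hφ : ∀ r : R, φ (Submodule.Quotient.mk r) = Submodule.Quotient.mk r := fun r =>
    Submodule.mapQ_apply _ _ _ _
  have hsurj : Function.Surjective φ := by
    intro y
    obtain ⟨r, rfl⟩ := Submodule.Quotient.mk_surjective _ y
    exact ⟨Submodule.Quotient.mk r, hφ r⟩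
  let ψ : (R ⧸ Ideal.span {b}) →ₗ[R] R ⧸ Ideal.span {a * b} :=
    Submodule.mapQ _ _ (LinearMap.mulLeft R a) (by
      rw [Ideal.span, Submodule.span_le]
      rintro x rfl
      simp only [SetLike.mem_coe, Submodule.mem_comap, LinearMap.mulLeft_apply]
      exact Ideal.mem_span_singleton_self _)
  have hψ : ∀ r : R, ψ (Submodule.Quotient.mk r) = Submodule.Quotient.mk (a * r) := fun r =>
    Submodule.mapQ_apply _ _ _ _
  have hinj : Function.Injective ψ := by
    rw [← LinearMap.ker_eq_bot, eq_bot_iff]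
    intro x hx
    obtain ⟨r, rfl⟩ := Submodule.Quotient.mk_surjective _ x
    rw [LinearMap.mem_ker, hψ, Submodule.Quotient.mk_eq_zero,
      Ideal.mem_span_singleton] at hx
    rw [Submodule.mem_bot, Submodule.Quotient.mk_eq_zero, Ideal.mem_span_singleton]
    exact (mul_dvd_mul_iff_left ha).1 hx
  have hrange : LinearMap.range ψ = LinearMap.ker φ := by
    apply le_antisymm
    · rintro _ ⟨x, rfl⟩
      obtain ⟨r, rfl⟩ := Submodule.Quotient.mk_surjective _ x
      rw [LinearMap.mem_ker, hψ, hφ, Submodule.Quotient.mk_eq_zero,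
        Ideal.mem_span_singleton]
      exact Dvd.intro r rfl
    · intro y hy
      obtain ⟨r, rfl⟩ := Submodule.Quotient.mk_surjective _ y
      rw [LinearMap.mem_ker, hφ, Submodule.Quotient.mk_eq_zero,
        Ideal.mem_span_singleton] at hy
      obtain ⟨s, rfl⟩ := hy
      exact ⟨Submodule.Quotient.mk s, hψ s⟩
  have e1 := LinearMap.quotKerEquivOfSurjective φ hsurj
  have e2 : (R ⧸ Ideal.span {b}) ≃ₗ[R] LinearMap.ker φ :=
    (LinearEquiv.ofInjective ψ hinj).trans (LinearEquiv.ofEq _ _ hrange)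
  have hcard := AddSubgroup.card_eq_card_quotient_mul_card_addSubgroup
    ((LinearMap.ker φ).toAddSubgroup : AddSubgroup (R ⧸ Ideal.span {a * b}))
  have h1 : Nat.card ((R ⧸ Ideal.span {a * b}) ⧸ (LinearMap.ker φ).toAddSubgroup)
      = Nat.card (R ⧸ Ideal.span {a}) := Nat.card_congr ((Equiv.refl _).trans e1.toEquiv)
  have h2 : Nat.card ((LinearMap.ker φ).toAddSubgroup)
      = Nat.card (R ⧸ Ideal.span {b}) := Nat.card_congr ((Equiv.refl _).trans e2.symm.toEquiv)
  rw [hcard, h1, h2]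

lemma card_quot_span_prod (hfin : ∀ I : Ideal R, I ≠ ⊥ → Finite (R ⧸ I))
    {ι : Type*} (s : Finset ι) (a : ι → R) (ha : ∀ i ∈ s, a i ≠ 0) :
    Nat.card (R ⧸ Ideal.span {∏ i ∈ s, a i}) = ∏ i ∈ s, Nat.card (R ⧸ Ideal.span {a i}) := by
  classical
  induction s using Finset.cons_induction with
  | empty =>
    rw [Finset.prod_empty, Finset.prod_empty, Ideal.span_singleton_one]
    have : Subsingleton (R ⧸ (⊤ : Ideal R)) := by
      constructor
      intro x y
      obtain ⟨x, rfl⟩ := Submodule.Quotient.mk_surjective _ x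
      obtain ⟨y, rfl⟩ := Submodule.Quotient.mk_surjective _ y
      rw [Submodule.Quotient.eq]
      exact Submodule.mem_top
    have : Nonempty (R ⧸ (⊤ : Ideal R)) := ⟨0⟩
    exact Nat.card_eq_one_iff_unique.2 ⟨‹_›, ‹_›⟩
  | cons i s hi ih =>
    rw [Finset.prod_cons, Finset.prod_cons,
      card_quot_span_mul hfin _ _ (ha i (Finset.mem_cons_self i s))
        (Finset.prod_ne_zero_iff.2 fun j hj => ha j (Finset.mem_cons_of_mem hj)),
      ih fun j hj => ha j (Finset.mem_cons_of_mem hj)]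

open Finset in
lemma prod_powersetCard_prod {n k : ℕ} (hk1 : 1 ≤ k) (hk2 : k ≤ n) (q : Fin n → ℕ) :
    ∏ S : {s : Finset (Fin n) // s.card = k}, ∏ i ∈ S.1, q i
      = (∏ i, q i) ^ Nat.choose (n - 1) (k - 1) := by
  classical
  have h1 : ∏ S : {s : Finset (Fin n) // s.card = k}, ∏ i ∈ S.1, q i
      = ∏ S ∈ powersetCard k (univ : Finset (Fin n)), ∏ i ∈ S, q i := by
    rw [← Finset.prod_subtype (powersetCard k (univ : Finset (Fin n)))
      (fun s => mem_powersetCard_univ) (fun s => ∏ i ∈ s, q i)]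
  rw [h1]
  have h2 : ∀ S ∈ powersetCard k (univ : Finset (Fin n)),
      ∏ i ∈ S, q i = ∏ i, if i ∈ S then q i else 1 := by
    intro S _
    rw [Finset.prod_ite_mem, Finset.univ_inter]
  rw [Finset.prod_congr rfl h2, Finset.prod_comm]
  have h3 : ∀ i : Fin n, ∏ S ∈ powersetCard k (univ : Finset (Fin n)),
      (if i ∈ S then q i else 1) = q i ^ Nat.choose (n - 1) (k - 1) := by
    intro i
    rw [Finset.prod_ite, Finset.prod_const, Finset.prod_const_one, mul_one]
    congr 1
    have : Finset.card ((powersetCard k (univ : Finset (Fin n))).filter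
        (fun S => i ∈ S)) = Nat.choose (n - 1) (k - 1) := by
      have hbij : ((powersetCard k (univ : Finset (Fin n))).filter (fun S => i ∈ S)).card
          = (powersetCard (k - 1) ((univ : Finset (Fin n)).erase i)).card := by
        apply Finset.card_bij (fun S _ => S.erase i)
        · intro S hS
          rw [Finset.mem_filter, Finset.mem_powersetCard_univ] at hS
          rw [Finset.mem_powersetCard]
          exact ⟨fun x hx => Finset.mem_erase.2
              ⟨(Finset.mem_erase.1 hx).1, Finset.mem_univ _⟩,
            by rw [Finset.card_erase_of_mem hS.2, hS.1]⟩
        · intro S1 h1' S2 h2' he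
          rw [Finset.mem_filter] at h1' h2'
          rw [← Finset.insert_erase h1'.2, he, Finset.insert_erase h2'.2]
        · intro T hT
          rw [Finset.mem_powersetCard] at hT
          have hiT : i ∉ T := fun hc => (Finset.mem_erase.1 (hT.1 hc)).1 rfl
          refine ⟨insert i T, ?_, by rw [Finset.erase_insert hiT]⟩
          rw [Finset.mem_filter, Finset.mem_powersetCard_univ]
          refine ⟨?_, Finset.mem_insert_self _ _⟩
          rw [Finset.card_insert_of_notMem hiT, hT.2]
          omega
      rw [hbij, Finset.card_powersetCard, Finset.card_erase_of_mem (Finset.mem_univ _),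
        Finset.card_univ, Fintype.card_fin]
    rw [this]
  rw [Finset.prod_congr rfl (fun i _ => h3 i), Finset.prod_pow]
end QuotCard


lemma exteriorPowerMap_coe {R M N : Type*} [CommRing R] [AddCommGroup M] [Module R M]
    [AddCommGroup N] [Module R N] (k : ℕ) (f : M →ₗ[R] N) (x : ⋀[R]^k M) :
    (exteriorPowerMap k f x : ExteriorAlgebra R N)
      = ExteriorAlgebra.map f (x : ExteriorAlgebra R M) :=
  rfl

/-- Let `R` be a principal ideal domain in which every proper quotient ring is finite, and let
`M` and `N` be free `R`-modules of rank `n` with `N ⊆ M` of finite index `[M : N]`.  Then for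
every `1 ≤ k ≤ n`, the index of `⋀^k(N)` in `⋀^k(M)` (where `⋀^k(N)` is embedded in `⋀^k(M)` via
the map induced by the inclusion) equals `[M : N] ^ binom(n-1, k-1)`. -/
theorem index_exteriorPower {R : Type*} [CommRing R] [IsDomain R] [IsPrincipalIdealRing R]
    (hfin : ∀ I : Ideal R, I ≠ ⊥ → Finite (R ⧸ I))
    {M : Type*} [AddCommGroup M] [Module R M] [Module.Free R M] [Module.Finite R M]
    (n : ℕ) (hrankM : Module.finrank R M = n)
    (N : Submodule R M) [Module.Free R ↥N] [Module.Finite R ↥N]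
    (hrankN : Module.finrank R ↥N = n)
    (hidx : Finite (M ⧸ N))
    (k : ℕ) (hk1 : 1 ≤ k) (hk2 : k ≤ n) :
    Nat.card ((⋀[R]^k M) ⧸ LinearMap.range (exteriorPowerMap k N.subtype))
      = Nat.card (M ⧸ N) ^ Nat.choose (n - 1) (k - 1) := by
  classical
  -- a basis of `M` indexed by `Fin n`
  let b : Module.Basis (Fin n) R M := (Module.finBasis R M).reindex (finCongr hrankM)
  -- Smith normal form
  obtain ⟨m, bM, bN, f, a, hsnf⟩ := Submodule.smithNormalForm b N
  have hm : m = n := by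
    rw [← hrankN, Module.finrank_eq_card_basis bN, Fintype.card_fin]
  subst hm
  -- reindex `bM` so that the SNF relation is diagonal
  have hfb : Function.Bijective f := (Finite.injective_iff_bijective).1 f.injective
  let σ : Fin m ≃ Fin m := Equiv.ofBijective f hfb
  let bB : Module.Basis (Fin m) R M := bM.reindex σ.symm
  have hsnf' : ∀ i, (bN i : M) = a i • bB i := by
    intro i
    rw [hsnf i]
    congr 1
    rw [Module.Basis.reindex_apply, Equiv.symm_symm]
    rfl
  have ha : ∀ i, a i ≠ 0 := by
    intro i hai
    apply bN.ne_zero i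
    have : (bN i : M) = 0 := by rw [hsnf' i, hai, zero_smul]
    exact Subtype.ext this
  -- `N` as a span
  have hNspan : N = Submodule.span R (Set.range fun i => a i • bB i) := by
    conv_lhs => rw [← Submodule.range_subtype N, LinearMap.range_eq_map,
      ← bN.span_eq, Submodule.map_span]
    rw [← Set.range_comp]
    have hfun : (⇑N.subtype ∘ ⇑bN) = (fun i => a i • bB i) := funext (fun i => hsnf' i)
    rw [hfun]
  have hcardMN : Nat.card (M ⧸ N) = ∏ i, Nat.card (R ⧸ Ideal.span {a i}) := by
    rw [hNspan]
    exact card_quot_span_smul bB a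
  -- the induced map on exterior powers sends basis vectors to multiples of basis vectors
  set c : {s : Finset (Fin m) // s.card = k} → R := fun S => ∏ i ∈ S.1, a i with hc
  have hkey : ∀ S, exteriorPowerMap k N.subtype (wedgeFamily R bN S)
      = c S • wedgeFamily R bB S := by
    intro S
    apply Subtype.ext
    rw [Submodule.coe_smul, exteriorPowerMap_coe, wedgeFamily_coe, wedgeFamily_coe,
      ExteriorAlgebra.map_apply_ιMulti]
    have hfun : (⇑N.subtype ∘ fun i => bN (S.1.orderIsoOfFin S.2 i))
        = fun i => a (S.1.orderIsoOfFin S.2 i) • bB (S.1.orderIsoOfFin S.2 i) := by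
      funext i
      exact hsnf' _
    rw [hfun]
    have hsmul : ExteriorAlgebra.ιMulti R k (M := M)
        (fun i => a (S.1.orderIsoOfFin S.2 i) • bB (S.1.orderIsoOfFin S.2 i))
        = (∏ i, a (S.1.orderIsoOfFin S.2 i)) • ExteriorAlgebra.ιMulti R k (M := M)
          (fun i => bB (S.1.orderIsoOfFin S.2 i)) :=
      (ExteriorAlgebra.ιMulti R k).toMultilinearMap.map_smul_univ _ _
    rw [hsmul]
    congr 1
    show (∏ i, a ((S.1.orderIsoOfFin S.2 i : Fin m))) = ∏ i ∈ S.1, a i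
    rw [← Finset.prod_coe_sort S.1 a]
    exact Equiv.prod_comp (S.1.orderIsoOfFin S.2).toEquiv (fun x => a ↑x)
  -- compute the range
  have hrange : LinearMap.range (exteriorPowerMap k N.subtype)
      = Submodule.span R (Set.range fun S => c S • wedgeBasis R bB k S) := by
    rw [LinearMap.range_eq_map, ← (wedgeBasis R bN k).span_eq, Submodule.map_span,
      ← Set.range_comp]
    congr 1
    have hfun2 : (⇑(exteriorPowerMap k N.subtype) ∘ ⇑(wedgeBasis R bN k))
        = fun S => c S • wedgeBasis R bB k S := by
      funext S
      show exteriorPowerMap k N.subtype (wedgeBasis R bN k S) = c S • wedgeBasis R bB k S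
      rw [wedgeBasis_apply, wedgeBasis_apply, hkey]
    rw [hfun2]
  have hcard : Nat.card ((⋀[R]^k M) ⧸ LinearMap.range (exteriorPowerMap k N.subtype))
      = ∏ S : {s : Finset (Fin m) // s.card = k}, Nat.card (R ⧸ Ideal.span {c S}) := by
    rw [hrange]
    exact card_quot_span_smul (wedgeBasis R bB k) c
  rw [hcard, hcardMN]
  have hSprod : ∀ S : {s : Finset (Fin m) // s.card = k},
      Nat.card (R ⧸ Ideal.span {c S}) = ∏ i ∈ S.1, Nat.card (R ⧸ Ideal.span {a i}) := by
    intro S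
    rw [hc]
    exact card_quot_span_prod hfin S.1 a (fun i _ => ha i)
  rw [Finset.prod_congr rfl (fun S _ => hSprod S)]
  exact prod_powersetCard_prod hk1 hk2 _
end

section
/- Let R be a principal ideal domain, G a finite group, and M an R-free RG-module of finite rank. If N is a maximal RG-submodule of M (maximal among proper RG-submodules), then there exists a maximal ideal m of R with mM ⊆ N. -/
/-- Let `R` be a principal ideal domain, `G` a finite group, and `M` an `R`-free `RG`-module of
finite rank (the `G`-action commuting with the `R`-action).  If `N` is a maximal `RG`-submodule of
`M` (i.e. a `G`-invariant `R`-submodule, maximal among proper ones), then there exists a maximal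
ideal `m` of `R` with `m • M ⊆ N`. -/
theorem exists_maximalIdeal_smul_le_of_maximal_submodule
    {R : Type*} [CommRing R] [IsDomain R] [IsPrincipalIdealRing R]
    {G : Type*} [Group G] [Finite G]
    {M : Type*} [AddCommGroup M] [Module R M] [Module.Free R M] [Module.Finite R M]
    [DistribMulAction G M] [SMulCommClass G R M]
    (N : Submodule R M) (hNinv : ∀ (g : G), ∀ x ∈ N, g • x ∈ N)
    (hNne : N ≠ ⊤)
    (hNmax : ∀ P : Submodule R M, (∀ (g : G), ∀ x ∈ P, g • x ∈ P) → N < P → P = ⊤) :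
    ∃ m : Ideal R, m.IsMaximal ∧ m • (⊤ : Submodule R M) ≤ N := by
  by_cases hf : IsField R
  · letI := hf.toField
    exact ⟨⊥, Ideal.bot_isMaximal, by simp⟩
  -- the ideal I = (N : M)
  set I : Ideal R := N.colon ⊤ with hI
  have memI : ∀ r : R, r ∈ I ↔ ∀ x : M, r • x ∈ N := by
    intro r
    simp [hI, Submodule.mem_colon]
  have hIsmul : ∀ r : R, r ∈ I → Ideal.span {r} • (⊤ : Submodule R M) ≤ N := by
    intro r hr
    rw [Submodule.smul_le]
    rintro c hc x -
    obtain ⟨t, rfl⟩ := Ideal.mem_span_singleton'.mp hc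
    rw [mul_smul]
    exact N.smul_mem t ((memI r).mp hr x)
  -- key step: if r ∉ I then N ⊔ rM = M
  have key : ∀ r : R, r ∉ I → N ⊔ Ideal.span {r} • (⊤ : Submodule R M) = ⊤ := by
    intro r hr
    apply hNmax
    · intro g x hx
      set fg := DistribMulAction.toLinearMap R M g with hfg
      have hmap : Submodule.map fg (N ⊔ Ideal.span {r} • (⊤ : Submodule R M)) ≤
          N ⊔ Ideal.span {r} • (⊤ : Submodule R M) := by
        rw [Submodule.map_sup, Submodule.map_smul'']
        apply sup_le_sup
        · rintro _ ⟨y, hy, rfl⟩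
          exact hNinv g y hy
        · exact Submodule.smul_mono le_rfl le_top
      exact hmap ⟨x, hx, rfl⟩
    · refine lt_of_le_of_ne le_sup_left ?_
      intro hEq
      apply hr
      rw [memI]
      intro x
      have hx : r • x ∈ N ⊔ Ideal.span {r} • (⊤ : Submodule R M) := by
        apply Submodule.mem_sup_right
        exact Submodule.smul_mem_smul (Ideal.mem_span_singleton_self r) trivial
      rwa [← hEq] at hx
  -- I is nonzero
  have hIne : I ≠ ⊥ := by
    intro hbot
    obtain ⟨c, hc0, hcu⟩ := Ring.exists_not_isUnit_of_not_isField hf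
    have hc : c ∉ I := by
      rw [hbot]
      simpa using hc0
    have htop := key c hc
    -- pass to the quotient M ⧸ N
    have hq : (⊤ : Submodule R (M ⧸ N)) ≤ Ideal.span {c} • ⊤ := by
      have := congrArg (Submodule.map N.mkQ) htop
      rw [Submodule.map_sup, Submodule.map_smul'', Submodule.map_top,
        Submodule.range_mkQ, Submodule.mkQ_map_self] at this
      rw [bot_sup_eq] at this
      exact ge_of_eq this
    obtain ⟨s, hs1, hs0⟩ := Submodule.exists_sub_one_mem_and_smul_eq_zero_of_fg_of_le_smul
      (Ideal.span {c}) ⊤ (Module.Finite.fg_top (R := R) (M := M ⧸ N)) hq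
    have hs : s ∈ I := by
      rw [memI]
      intro x
      have : N.mkQ (s • x) = 0 := by
        rw [map_smul]
        exact hs0 _ trivial
      rwa [Submodule.mkQ_apply, Submodule.Quotient.mk_eq_zero] at this
    rw [hbot, Submodule.mem_bot] at hs
    subst hs
    apply hcu
    obtain ⟨t, ht⟩ := Ideal.mem_span_singleton'.mp hs1
    exact IsUnit.of_mul_eq_one (a := c) (-t) (by linear_combination -ht)
  -- I is prime
  have hIprime : I.IsPrime := by
    constructor
    · intro htop
      apply hNne
      have : (1 : R) ∈ I := htop ▸ trivial
      rw [memI] at this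
      rw [eq_top_iff]
      intro x _
      simpa using this x
    · intro a b hab
      by_contra h
      push_neg at h
      obtain ⟨ha, hb⟩ := h
      have htop := key b hb
      apply ha
      rw [memI]
      intro x
      have hx : a • x ∈ Submodule.map (LinearMap.lsmul R M a)
          (N ⊔ Ideal.span {b} • (⊤ : Submodule R M)) := by
        rw [htop]
        exact ⟨x, trivial, rfl⟩
      rw [Submodule.map_sup, Submodule.map_smul''] at hx
      have hle : Submodule.map (LinearMap.lsmul R M a) N ⊔
          Ideal.span {b} • Submodule.map (LinearMap.lsmul R M a) (⊤ : Submodule R M) ≤ N := by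
        apply sup_le
        · rintro _ ⟨y, hy, rfl⟩
          exact N.smul_mem a hy
        · refine le_trans (Submodule.smul_le.mpr ?_) le_rfl
          rintro c hc _ ⟨y, -, rfl⟩
          obtain ⟨t, rfl⟩ := Ideal.mem_span_singleton'.mp hc
          have h1 : (a * b) • (t • y) ∈ N := (memI _).mp hab _
          have h2 : (t * b) • (LinearMap.lsmul R M a) y = (a * b) • t • y := by
            simp only [LinearMap.lsmul_apply, smul_smul]
            congr 1
            ring
          rwa [h2]
      exact hle hx
  refine ⟨I, IsPrime.to_maximal_ideal hIne, ?_⟩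
  rw [Submodule.smul_le]
  intro r hr x _
  exact (memI r).mp hr x
end

section
/- Let p be a prime, G a finite group, and V an absolutely simple Q_p G-module. Suppose M is a Z_p-form of V such that M/pM is an absolutely simple F_p G-module. Then every Z_p-form of V is isomorphic to M; i.e., V has a unique Z_p-form up to isomorphism. -/
open Pointwise

private lemma padic_smul_eq (p : ℕ) [Fact p.Prime] {V : Type*} [AddCommGroup V]
    [Module ℚ_[p] V] [Module ℤ_[p] V] [IsScalarTower ℤ_[p] ℚ_[p] V]
    (a : ℤ_[p]) (v : V) : a • v = (a : ℚ_[p]) • v := by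
  rw [← PadicInt.algebraMap_apply, algebraMap_smul]

private lemma padic_clear_denom (p : ℕ) [Fact p.Prime] (q : ℚ_[p]) :
    ∃ (t : ℕ) (a : ℤ_[p]), (a : ℚ_[p]) = (p : ℚ_[p]) ^ t * q := by
  have hp1 : (1 : ℝ) < p := by exact_mod_cast (Fact.out : p.Prime).one_lt
  obtain ⟨t, ht⟩ := pow_unbounded_of_one_lt ‖q‖ hp1
  have hpt : (0 : ℝ) < (p : ℝ) ^ t := by positivity
  refine ⟨t, ⟨(p : ℚ_[p]) ^ t * q, ?_⟩, rfl⟩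
  rw [norm_mul, norm_pow, Padic.norm_p, inv_pow, inv_mul_eq_div, div_le_one hpt]
  exact ht.le

private lemma pow_smul_mem_of_mem (p : ℕ) [Fact p.Prime] {V : Type*} [AddCommGroup V]
    [Module ℚ_[p] V] [Module ℤ_[p] V] [IsScalarTower ℤ_[p] ℚ_[p] V]
    (P : Submodule ℤ_[p] V) (k : ℕ) {y : V} (hy : y ∈ P) : (p : ℚ_[p]) ^ k • y ∈ P := by
  have : (p : ℚ_[p]) ^ k • y = ((p : ℤ_[p]) ^ k) • y := by
    rw [padic_smul_eq]; push_cast; ring_nf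
  rw [this]; exact P.smul_mem _ hy

private lemma exists_pow_smul_mem (p : ℕ) [Fact p.Prime] {V : Type*} [AddCommGroup V]
    [Module ℚ_[p] V] [Module ℤ_[p] V] [IsScalarTower ℤ_[p] ℚ_[p] V]
    (P : Submodule ℤ_[p] V) (hP : Submodule.span ℚ_[p] (P : Set V) = ⊤)
    (P' : Submodule ℤ_[p] V) (hP' : P'.FG) :
    ∃ m : ℕ, ∀ x ∈ P', (p : ℚ_[p]) ^ m • x ∈ P := by
  classical
  -- single elements
  have key1 : ∀ x : V, ∃ m : ℕ, (p : ℚ_[p]) ^ m • x ∈ P := by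
    intro x
    have hx : x ∈ Submodule.span ℚ_[p] (P : Set V) := hP ▸ Submodule.mem_top
    induction hx using Submodule.span_induction with
    | mem y hy => exact ⟨0, by simpa using hy⟩
    | zero => exact ⟨0, by simp⟩
    | add x y hx hy ihx ihy =>
        obtain ⟨m, hm⟩ := ihx; obtain ⟨n, hn⟩ := ihy
        refine ⟨m + n, ?_⟩
        rw [smul_add]
        refine P.add_mem ?_ ?_
        · have := pow_smul_mem_of_mem p P n hm
          rwa [smul_smul, ← pow_add, add_comm] at this
        · have := pow_smul_mem_of_mem p P m hn
          rwa [smul_smul, ← pow_add] at this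
    | smul q x hx ihx =>
        obtain ⟨m, hm⟩ := ihx
        obtain ⟨t, a, ha⟩ := padic_clear_denom p q
        refine ⟨t + m, ?_⟩
        have : (p : ℚ_[p]) ^ (t + m) • (q • x) = a • ((p : ℚ_[p]) ^ m • x) := by
          rw [padic_smul_eq, smul_smul, smul_smul, ha, pow_add]; ring_nf
        rw [this]; exact P.smul_mem a hm
  obtain ⟨s, hs⟩ := hP'
  set t := s.sup fun v => (key1 v).choose with ht
  refine ⟨t, fun x hx => ?_⟩
  rw [← hs] at hx
  induction hx using Submodule.span_induction with
  | mem y hy =>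
      obtain hm := (key1 y).choose_spec
      have hle : (key1 y).choose ≤ t := Finset.le_sup (f := fun v => (key1 v).choose) hy
      have := pow_smul_mem_of_mem p P (t - (key1 y).choose) hm
      rwa [smul_smul, ← pow_add, Nat.sub_add_cancel hle] at this
  | zero => simp
  | add x y hx hy ihx ihy => rw [smul_add]; exact P.add_mem ihx ihy
  | smul a x hx ihx =>
      have : (p : ℚ_[p]) ^ t • (a • x) = a • ((p : ℚ_[p]) ^ t • x) := by
        rw [padic_smul_eq p a, padic_smul_eq p a, smul_comm]
      rw [this]; exact P.smul_mem a ihx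


/-- Let `p` be a prime, `G` a finite group, and `V` an absolutely simple `ℚ_[p]G`-module (simple
with scalar equivariant endomorphisms).  Suppose `M` is a `ℤ_[p]`-form of `V` such that `M/pM` is
an absolutely simple `𝔽_p G`-module; the reduction `M/pM` is presented as a `ZMod p`-module `Q`
with `G`-action together with an equivariant surjection `π : M → Q` with kernel `pM`.  Then every
`ℤ_[p]`-form `N` of `V` is isomorphic to `M` as a `ℤ_[p]G`-module. -/
theorem unique_form_of_abs_simple_reduction
    (p : ℕ) [Fact p.Prime] {G : Type*} [Group G] [Finite G]
    {V : Type*} [AddCommGroup V] [Module ℚ_[p] V] [FiniteDimensional ℚ_[p] V]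
    [Module ℤ_[p] V] [IsScalarTower ℤ_[p] ℚ_[p] V]
    [DistribMulAction G V] [SMulCommClass G ℚ_[p] V]
    (hVnt : Nontrivial V)
    (hVsimple : ∀ W : Submodule ℚ_[p] V, (∀ (g : G), ∀ x ∈ W, g • x ∈ W) → W = ⊥ ∨ W = ⊤)
    (hVabs : ∀ f : V →ₗ[ℚ_[p]] V, (∀ (g : G) (x : V), f (g • x) = g • f x) →
      ∃ c : ℚ_[p], f = c • LinearMap.id)
    (M : Submodule ℤ_[p] V) (hMfg : M.FG)
    (hMspan : Submodule.span ℚ_[p] (M : Set V) = ⊤)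
    (hMinv : ∀ (g : G), ∀ x ∈ M, g • x ∈ M)
    {Q : Type*} [AddCommGroup Q] [Module (ZMod p) Q]
    [DistribMulAction G Q] [SMulCommClass G (ZMod p) Q]
    (π : ↥M →+ Q) (hπsurj : Function.Surjective π)
    (hπsmul : ∀ (a : ℤ_[p]) (x : ↥M), π (a • x) = PadicInt.toZMod a • π x)
    (hπker : ∀ x : ↥M, π x = 0 ↔ (x : V) ∈ Ideal.span {(p : ℤ_[p])} • M)
    (hπequiv : ∀ (g : G) (x : ↥M), π ⟨g • (x : V), hMinv g _ x.2⟩ = g • π x)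
    (hQnt : Nontrivial Q)
    (hQsimple : ∀ W : Submodule (ZMod p) Q, (∀ (g : G), ∀ x ∈ W, g • x ∈ W) → W = ⊥ ∨ W = ⊤)
    (hQabs : ∀ f : Q →ₗ[ZMod p] Q, (∀ (g : G) (x : Q), f (g • x) = g • f x) →
      ∃ c : ZMod p, f = c • LinearMap.id)
    (N : Submodule ℤ_[p] V) (hNfg : N.FG)
    (hNspan : Submodule.span ℚ_[p] (N : Set V) = ⊤)
    (hNinv : ∀ (g : G), ∀ x ∈ N, g • x ∈ N) :
    ∃ e : ↥N ≃ₗ[ℤ_[p]] ↥M, ∀ (g : G) (x : ↥N),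
      ((e ⟨g • (x : V), hNinv g _ x.2⟩ : ↥M) : V) = g • ((e x : ↥M) : V) := by
  classical
  have hp1 : (1 : ℝ) < p := by exact_mod_cast (Fact.out : p.Prime).one_lt
  have hp0 : (p : ℚ_[p]) ≠ 0 := by
    exact_mod_cast (Nat.cast_ne_zero (R := ℚ_[p])).mpr (Fact.out : p.Prime).ne_zero
  -- a nonzero element of N
  have hx₀ : ∃ x₀ ∈ N, x₀ ≠ (0 : V) := by
    by_contra h
    push_neg at h
    have : (N : Set V) ⊆ {0} := fun x hx => h x hx
    have h2 := Submodule.span_mono (R := ℚ_[p]) this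
    rw [hNspan] at h2
    simp only [Submodule.span_singleton_eq_bot.mpr rfl, top_le_iff] at h2
    haveI := hVnt
    exact absurd h2 bot_ne_top
  obtain ⟨x₀, hx₀N, hx₀ne⟩ := hx₀
  -- a functional with φ x₀ = 1
  obtain ⟨φ, hφ⟩ := (LinearMap.toSpanSingleton ℚ_[p] V x₀).exists_leftInverse_of_injective
    (LinearMap.ker_toSpanSingleton (R := ℚ_[p]) (M := V) hx₀ne)
  have hφx₀ : φ x₀ = 1 := by
    have := LinearMap.congr_fun hφ 1
    simpa using this
  -- bound: p^t * φ(M) ⊆ ℤ_p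
  have hφM : ∃ t : ℕ, ∀ y ∈ M, ∃ a : ℤ_[p], (a : ℚ_[p]) = (p : ℚ_[p]) ^ t * φ y := by
    obtain ⟨s, hs⟩ := hMfg
    refine ⟨s.sup fun v => (padic_clear_denom p (φ v)).choose, fun y hy => ?_⟩
    set t := s.sup fun v => (padic_clear_denom p (φ v)).choose with htdef
    rw [← hs] at hy
    induction hy using Submodule.span_induction with
    | mem v hv =>
        obtain ⟨a, ha⟩ := (padic_clear_denom p (φ v)).choose_spec
        have hle : (padic_clear_denom p (φ v)).choose ≤ t :=
          Finset.le_sup (f := fun v => (padic_clear_denom p (φ v)).choose) hv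
        refine ⟨(p : ℤ_[p]) ^ (t - (padic_clear_denom p (φ v)).choose) * a, ?_⟩
        push_cast
        rw [ha, ← mul_assoc, ← pow_add, Nat.sub_add_cancel hle]
    | zero => exact ⟨0, by simp⟩
    | add x y hx hy ihx ihy =>
        obtain ⟨a, ha⟩ := ihx; obtain ⟨b, hb⟩ := ihy
        exact ⟨a + b, by push_cast; rw [ha, hb, map_add, mul_add]⟩
    | smul r y hy ihy =>
        obtain ⟨a, ha⟩ := ihy
        refine ⟨r * a, ?_⟩
        rw [padic_smul_eq, map_smul, smul_eq_mul]
        push_cast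
        rw [ha]; ring
  obtain ⟨t, hφM⟩ := hφM
  -- the set of integer exponents n with p^n • N ⊆ M
  set T : ℤ → Prop := fun n => ∀ x ∈ N, (p : ℚ_[p]) ^ n • x ∈ M with hTdef
  have hTinh : ∃ n : ℤ, T n := by
    obtain ⟨m, hm⟩ := exists_pow_smul_mem p M hMspan N hNfg
    exact ⟨(m : ℤ), fun x hx => by rw [zpow_natCast]; exact hm x hx⟩
  have hTbdd : ∃ b : ℤ, ∀ n : ℤ, T n → b ≤ n := by
    refine ⟨-(t : ℤ), fun n hn => ?_⟩
    obtain ⟨a, ha⟩ := hφM _ (hn x₀ hx₀N)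
    rw [map_smul, smul_eq_mul, hφx₀, mul_one, ← zpow_natCast, ← zpow_add₀ hp0] at ha
    have hnorm : ‖(p : ℚ_[p]) ^ ((t : ℤ) + n)‖ ≤ 1 := ha ▸ a.2
    rw [Padic.norm_p_zpow] at hnorm
    have h0 : -((t : ℤ) + n) ≤ 0 := by
      have := (zpow_le_zpow_iff_right₀ hp1 (m := -((t : ℤ) + n)) (n := 0)).mp
        (by simpa using hnorm)
      exact this
    linarith
  obtain ⟨n₀, hn₀T, hn₀min⟩ := Int.exists_least_of_bdd hTbdd hTinh
  set c : ℚ_[p] := (p : ℚ_[p]) ^ n₀ with hcdef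
  have hc0 : c ≠ 0 := zpow_ne_zero _ hp0
  have hcN : ∀ x ∈ N, c • x ∈ M := hn₀T
  -- existence of an element not mapping into pM
  have hx₁ : ∃ x₁ ∈ N, (p : ℚ_[p]) ^ (n₀ - 1) • x₁ ∉ M := by
    by_contra h
    push_neg at h
    have : T (n₀ - 1) := h
    have := hn₀min _ this
    omega
  obtain ⟨x₁, hx₁N, hx₁f⟩ := hx₁
  haveI : NeZero p := ⟨(Fact.out : p.Prime).ne_zero⟩
  -- membership in pM
  have hpM : ∀ v : V, v ∈ (Ideal.span {(p : ℤ_[p])} : Ideal ℤ_[p]) • M →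
      ∃ m ∈ M, (p : ℤ_[p]) • m = v := by
    intro v hv
    rw [Submodule.ideal_span_singleton_smul] at hv
    rw [← SetLike.mem_coe, Submodule.coe_pointwise_smul] at hv
    obtain ⟨m, hm, rfl⟩ := hv
    exact ⟨m, hm, rfl⟩
  -- the image of c • N in Q is nonzero
  have hπx₁ : π ⟨c • x₁, hcN x₁ hx₁N⟩ ≠ 0 := by
    intro h0
    obtain ⟨m, hmM, hme⟩ := hpM _ ((hπker _).mp h0)
    apply hx₁f
    have hme' : (p : ℚ_[p]) • m = c • x₁ := by
      have h5 : ((p : ℤ_[p]) : ℚ_[p]) • m = c • x₁ := by rw [← padic_smul_eq]; exact hme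
      rwa [PadicInt.coe_natCast] at h5
    have heq : (p : ℚ_[p]) ^ (n₀ - 1) • x₁ = m := by
      rw [show n₀ - 1 = -1 + n₀ by ring, zpow_add₀ hp0, zpow_neg_one, ← hcdef,
        mul_smul, ← hme', smul_smul, inv_mul_cancel₀ hp0, one_smul]
    rw [heq]; exact hmM
  -- the submodule of Q generated by the image of c • N
  let W : Submodule (ZMod p) Q :=
  { carrier := {q | ∃ x, ∃ hx : x ∈ N, π ⟨c • x, hcN x hx⟩ = q}
    zero_mem' := ⟨0, N.zero_mem, by
      have h1 : (⟨c • (0:V), hcN 0 N.zero_mem⟩ : ↥M) = 0 := Subtype.ext (smul_zero c)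
      rw [h1, map_zero]⟩
    add_mem' := by
      rintro q₁ q₂ ⟨x, hx, rfl⟩ ⟨y, hy, rfl⟩
      refine ⟨x + y, N.add_mem hx hy, ?_⟩
      have h1 : (⟨c • (x+y), hcN _ (N.add_mem hx hy)⟩ : ↥M)
          = (⟨c • x, hcN x hx⟩ : ↥M) + ⟨c • y, hcN y hy⟩ := Subtype.ext (smul_add c x y)
      rw [h1, map_add]
    smul_mem' := by
      rintro n q ⟨x, hx, rfl⟩
      obtain ⟨k, rfl⟩ := ZMod.natCast_zmod_surjective n
      refine ⟨(k : ℤ_[p]) • x, N.smul_mem _ hx, ?_⟩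
      have h1 : (⟨c • ((k:ℤ_[p]) • x), hcN _ (N.smul_mem _ hx)⟩ : ↥M)
          = (k : ℤ_[p]) • (⟨c • x, hcN x hx⟩ : ↥M) := by
        apply Subtype.ext
        show c • ((k:ℤ_[p]) • x) = (k:ℤ_[p]) • (c • x)
        rw [padic_smul_eq p, padic_smul_eq p ((k:ℤ_[p])), smul_comm]
      rw [h1, hπsmul, map_natCast] }
  have hWinv : ∀ (g : G), ∀ q ∈ W, g • q ∈ W := by
    rintro g q ⟨x, hx, rfl⟩
    refine ⟨g • x, hNinv g x hx, ?_⟩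
    rw [← hπequiv g ⟨c • x, hcN x hx⟩]
    congr 1
    exact Subtype.ext (smul_comm g c x).symm
  have hWne : W ≠ ⊥ := by
    intro hbot
    apply hπx₁
    have hmem : π ⟨c • x₁, hcN x₁ hx₁N⟩ ∈ W := ⟨x₁, hx₁N, rfl⟩
    rw [hbot] at hmem; simpa using hmem
  have hWtop : W = ⊤ := (hQsimple W hWinv).resolve_left hWne
  -- scaling map
  let σ : V →ₗ[ℤ_[p]] V :=
  { toFun := fun v => c • v
    map_add' := fun u v => smul_add c u v
    map_smul' := fun a v => by
      simp only [RingHom.id_apply]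
      rw [padic_smul_eq p a, padic_smul_eq p a, smul_comm] }
  -- Nakayama
  have hle : M ≤ N.map σ ⊔ (Ideal.span {(p : ℤ_[p])}) • M := by
    intro m hm
    have hmem : π ⟨m, hm⟩ ∈ W := by rw [hWtop]; trivial
    obtain ⟨x, hx, hπx⟩ := hmem
    have hdiff : π ((⟨m, hm⟩ : ↥M) - ⟨c • x, hcN x hx⟩) = 0 := by
      rw [map_sub, hπx, sub_self]
    have hd := (hπker _).mp hdiff
    have hd' : m - c • x ∈ (Ideal.span {(p : ℤ_[p])}) • M := by
      simpa using hd
    exact Submodule.mem_sup.mpr ⟨c • x, ⟨x, hx, rfl⟩, m - c • x, hd', by abel⟩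
  have hIJ : (Ideal.span {(p : ℤ_[p])} : Ideal ℤ_[p]) ≤ Ideal.jacobson ⊥ := by
    rw [← PadicInt.maximalIdeal_eq_span_p]
    exact IsLocalRing.maximalIdeal_le_jacobson ⊥
  have hMle : M ≤ N.map σ := Submodule.le_of_le_smul_of_le_jacobson_bot hMfg hIJ hle
  have hNM : N.map σ = M := le_antisymm (by rintro _ ⟨x, hx, rfl⟩; exact hcN x hx) hMle
  -- the isomorphism
  let f : ↥N →ₗ[ℤ_[p]] ↥M :=
  { toFun := fun x => ⟨c • (x : V), hcN _ x.2⟩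
    map_add' := fun x y =>
      Subtype.ext (show c • ((x:V) + y) = c • (x:V) + c • (y:V) from smul_add c _ _)
    map_smul' := fun a x => Subtype.ext (by
      show c • ((a • x : ↥N) : V) = a • (c • (x:V))
      rw [Submodule.coe_smul, padic_smul_eq p a, padic_smul_eq p a, smul_comm]) }
  have hinj : Function.Injective f := by
    intro x y h
    apply Subtype.ext
    have h3 : c • (x:V) = c • (y:V) := congrArg Subtype.val h
    have h4 := congrArg (fun v => c⁻¹ • v) h3
    simpa [smul_smul, inv_mul_cancel₀ hc0] using h4
  have hsurj : Function.Surjective f := by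
    intro m
    have hmem : (m : V) ∈ N.map σ := hNM ▸ m.2
    obtain ⟨x, hx, hxm⟩ := hmem
    exact ⟨⟨x, hx⟩, Subtype.ext hxm⟩
  refine ⟨LinearEquiv.ofBijective f ⟨hinj, hsurj⟩, fun g x => ?_⟩
  show c • (g • (x:V)) = g • (c • (x:V))
  exact (smul_comm g c (x:V)).symm
end

section
/- Let λ be a partition of n, and let M^λ_Z be the integral Young permutation module on λ-tabloids with its standard Z-basis and associated symmetric 𝔖_n-invariant bilinear form ⟨·|·⟩. If U is a Z𝔖_n-submodule of M^λ_Z with U ⊄ (S^λ_Z)^⊥, then there exists a positive integer m with m·S^λ_Z ⊆ U. -/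
open Finset

noncomputable section

variable (n : ℕ) (l : List ℕ)

/-- A `λ`-tabloid, for the partition `λ` of `n` given by the list `l` of row lengths: a row
function on `{1,…,n}` whose fibers have the prescribed sizes. -/
def Tabloid := {r : Fin n → Fin l.length //
  ∀ j : Fin l.length, (Finset.univ.filter (fun i => r i = j)).card = l.get j}

instance : Fintype (Tabloid n l) := by unfold Tabloid; infer_instance
instance : DecidableEq (Tabloid n l) := by unfold Tabloid; infer_instance

/-- The natural action of `σ ∈ 𝔖_n` on tabloids. -/
def permTabloid (σ : Equiv.Perm (Fin n)) (τ : Tabloid n l) : Tabloid n l :=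
  ⟨fun i => τ.1 (σ⁻¹ i), fun j => by
    have h : (Finset.univ.filter (fun i => τ.1 (σ⁻¹ i) = j)).card
        = (Finset.univ.filter (fun i => τ.1 i = j)).card := by
      rw [← Fintype.card_subtype, ← Fintype.card_subtype]
      exact Fintype.card_congr
        (Equiv.subtypeEquiv (p := fun i => τ.1 (σ⁻¹ i) = j) (q := fun i => τ.1 i = j)
          σ⁻¹ (fun a => Iff.rfl))
    rw [h]; exact τ.2 j⟩

/-- The action of `σ ∈ 𝔖_n` on the Young permutation module `M^λ_ℤ`, the free `ℤ`-module on the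
set of `λ`-tabloids. -/
def actYoung (σ : Equiv.Perm (Fin n)) : (Tabloid n l → ℤ) →ₗ[ℤ] (Tabloid n l → ℤ) :=
  LinearMap.funLeft ℤ ℤ (permTabloid n l σ⁻¹)

/-- A `λ`-tableau: a placement of the numbers `1,…,n` in the cells of the Young diagram of `λ`,
recorded by the row and column index of each entry. -/
structure Tableau where
  row : Fin n → Fin l.length
  col : Fin n → ℕ
  colLt : ∀ x, col x < l.get (row x)
  posInj : Function.Injective (fun x => (row x, col x))
  rowCard : ∀ j, (Finset.univ.filter (fun i => row i = j)).card = l.get j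

/-- The tabloid `{t}` of a tableau `t`. -/
def rowOf (t : Tableau n l) : Tabloid n l := ⟨t.row, t.rowCard⟩

/-- The column stabilizer `C_t` of a tableau `t`. -/
def colStab (t : Tableau n l) : Finset (Equiv.Perm (Fin n)) :=
  Finset.univ.filter (fun σ => ∀ v, t.col (σ v) = t.col v)

/-- The polytabloid `e_t = Σ_{σ ∈ C_t} sgn(σ)·σ{t}` of a tableau `t`. -/
def polytabloid (t : Tableau n l) : Tabloid n l → ℤ :=
  ∑ σ ∈ colStab n l t,
    (Equiv.Perm.sign σ : ℤ) • Pi.single (permTabloid n l σ (rowOf n l t)) (1 : ℤ)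

/-- The integral Specht module `S^λ_ℤ ⊆ M^λ_ℤ`, spanned by the polytabloids. -/
def Specht : Submodule ℤ (Tabloid n l → ℤ) :=
  Submodule.span ℤ (Set.range (polytabloid n l))
----------------------------------------------------------------------
-- Auxiliary development for the integral submodule theorem
----------------------------------------------------------------------

section Aux

variable {n l}

lemma permTabloid_mul (σ ρ : Equiv.Perm (Fin n)) (τ : Tabloid n l) :
    permTabloid n l σ (permTabloid n l ρ τ) = permTabloid n l (σ * ρ) τ := by
  apply Subtype.ext; funext i
  simp [permTabloid, mul_inv_rev]

lemma permTabloid_one (τ : Tabloid n l) : permTabloid n l 1 τ = τ := by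
  apply Subtype.ext; funext i; simp [permTabloid]

lemma permTabloid_cancel (σ : Equiv.Perm (Fin n)) (τ : Tabloid n l) :
    permTabloid n l σ⁻¹ (permTabloid n l σ τ) = τ := by
  rw [permTabloid_mul, inv_mul_cancel, permTabloid_one]

lemma permTabloid_eq_iff (σ : Equiv.Perm (Fin n)) (τ ρ : Tabloid n l) :
    permTabloid n l σ⁻¹ ρ = τ ↔ ρ = permTabloid n l σ τ := by
  constructor
  · rintro rfl
    rw [permTabloid_mul, mul_inv_cancel, permTabloid_one]
  · rintro rfl; exact permTabloid_cancel σ τ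

lemma actYoung_single (σ : Equiv.Perm (Fin n)) (s : Tabloid n l) :
    actYoung n l σ (Pi.single s 1) = Pi.single (permTabloid n l σ s) (1 : ℤ) := by
  funext τ
  show Pi.single s 1 (permTabloid n l σ⁻¹ τ) = _
  rw [Pi.single_apply, Pi.single_apply]
  simp only [permTabloid_eq_iff]

lemma mem_colStab {t : Tableau n l} {σ : Equiv.Perm (Fin n)} :
    σ ∈ colStab n l t ↔ ∀ v, t.col (σ v) = t.col v := by
  simp [colStab]

lemma one_mem_colStab (t : Tableau n l) : (1 : Equiv.Perm (Fin n)) ∈ colStab n l t := by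
  simp [mem_colStab]

lemma mul_mem_colStab {t : Tableau n l} {σ ρ : Equiv.Perm (Fin n)}
    (hσ : σ ∈ colStab n l t) (hρ : ρ ∈ colStab n l t) : σ * ρ ∈ colStab n l t := by
  rw [mem_colStab] at *
  intro v; rw [Equiv.Perm.mul_apply, hσ, hρ]

lemma inv_mem_colStab {t : Tableau n l} {σ : Equiv.Perm (Fin n)}
    (hσ : σ ∈ colStab n l t) : σ⁻¹ ∈ colStab n l t := by
  rw [mem_colStab] at *
  intro v
  have := hσ (σ⁻¹ v)
  simpa using this.symm

lemma exists_perm {α : Type*} (f g : Fin n → α) (hf : Function.Injective f)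
    (h : ∀ x, ∃ y, g y = f x) :
    ∃ π : Equiv.Perm (Fin n), ∀ x, g (π x) = f x := by
  choose h' hh' using h
  have hinj : Function.Injective h' := by
    intro a b hab
    apply hf
    rw [← hh' a, ← hh' b, hab]
  exact ⟨Equiv.ofBijective h' (Finite.injective_iff_bijective.mp hinj), hh'⟩

open Finset in
lemma col_image (t : Tableau n l) (j : Fin l.length) :
    (univ.filter fun x => t.row x = j).image t.col = Finset.range (l.get j) := by
  apply Finset.eq_of_subset_of_card_le
  · intro c hc
    simp only [mem_image, mem_filter, mem_univ, true_and] at hc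
    obtain ⟨x, hx, rfl⟩ := hc
    rw [Finset.mem_range, ← hx]
    exact t.colLt x
  · rw [Finset.card_range, ← t.rowCard j]
    apply Finset.card_le_card_of_injOn t.col (by intro x hx; exact Finset.mem_image_of_mem _ hx)
    intro a ha b hb hab
    simp only [mem_coe, mem_filter, mem_univ, true_and] at ha hb
    exact t.posInj (show (t.row a, t.col a) = (t.row b, t.col b) by rw [ha, hb, hab])

open Finset in
lemma exists_cell (t : Tableau n l) {j : Fin l.length} {c : ℕ} (h : c < l.get j) :
    ∃ x, t.row x = j ∧ t.col x = c := by
  have : c ∈ (univ.filter fun x => t.row x = j).image t.col := by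
    rw [col_image]; exact Finset.mem_range.mpr h
  simp only [mem_image, mem_filter, mem_univ, true_and] at this
  obtain ⟨x, hx, rfl⟩ := this
  exact ⟨x, hx, rfl⟩

open Finset in
lemma card_row_tail (t : Tableau n l) (j : Fin l.length) (c : ℕ) :
    (univ.filter fun x => t.row x = j ∧ c ≤ t.col x).card = l.get j - c := by
  have hsub : (univ.filter fun x => t.row x = j ∧ c ≤ t.col x)
      = (univ.filter fun x => t.row x = j).filter (fun x => c ≤ t.col x) := by
    rw [Finset.filter_filter]
  rw [hsub]
  have hinj : Set.InjOn t.col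
      ((univ.filter fun x => t.row x = j).filter (fun x => c ≤ t.col x)) := by
    intro a ha b hb hab
    simp only [mem_coe, mem_filter, mem_univ, true_and] at ha hb
    exact t.posInj (show (t.row a, t.col a) = (t.row b, t.col b) by rw [ha.1, hb.1, hab])
  rw [← Finset.card_image_of_injOn hinj]
  rw [← Finset.filter_image, col_image]
  have : (Finset.range (l.get j)).filter (fun v => c ≤ v) = Finset.Ico c (l.get j) := by
    ext v; simp [Finset.mem_Ico, and_comm]
  rw [this, Nat.card_Ico]

open Finset in
lemma A_eq {t : Tableau n l} {s : Tabloid n l}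
    (H : ∀ a b, t.col a = t.col b → s.1 a = s.1 b → a = b)
    (c : ℕ) (j : Fin l.length) :
    (univ.filter fun x => s.1 x = j ∧ c ≤ t.col x).card = l.get j - c := by
  have hge : ∀ j : Fin l.length,
      l.get j - c ≤ (univ.filter fun x => s.1 x = j ∧ c ≤ t.col x).card := by
    intro j
    have hsplit := Finset.card_filter_add_card_filter_not
      (s := univ.filter fun x => s.1 x = j) (p := fun x => c ≤ t.col x)
    rw [Finset.filter_filter, Finset.filter_filter, s.2 j] at hsplit
    have hsmall : ((univ : Finset (Fin n)).filter
        fun x => s.1 x = j ∧ ¬ c ≤ t.col x).card ≤ c := by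
      have : ((univ : Finset (Fin n)).filter fun x => s.1 x = j ∧ ¬ c ≤ t.col x).card
          ≤ (Finset.range c).card := by
        apply Finset.card_le_card_of_injOn t.col
        · intro x hx
          simp only [mem_coe, mem_filter, mem_univ, true_and, not_le] at hx
          exact Finset.mem_range.mpr hx.2
        · intro a ha b hb hab
          simp only [mem_coe, mem_filter, mem_univ, true_and] at ha hb
          exact H a b hab (ha.1.trans hb.1.symm)
      simpa using this
    omega
  have htot : ∑ j : Fin l.length, (univ.filter fun x => s.1 x = j ∧ c ≤ t.col x).card
      = ∑ j : Fin l.length, (l.get j - c) := by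
    have h1 : ((univ : Finset (Fin n)).filter fun x => c ≤ t.col x).card
        = ∑ j : Fin l.length, (univ.filter fun x => s.1 x = j ∧ c ≤ t.col x).card := by
      rw [Finset.card_eq_sum_card_fiberwise (f := fun x => s.1 x) (t := univ)
        (fun x _ => mem_univ _)]
      apply Finset.sum_congr rfl
      intro j _
      congr 1
      ext x
      simp only [Finset.filter_filter, mem_filter, mem_univ, true_and]
      tauto
    have h2 : ((univ : Finset (Fin n)).filter fun x => c ≤ t.col x).card
        = ∑ j : Fin l.length, (l.get j - c) := by
      rw [Finset.card_eq_sum_card_fiberwise (f := fun x => t.row x) (t := univ)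
        (fun x _ => mem_univ _)]
      apply Finset.sum_congr rfl
      intro j _
      rw [← card_row_tail t j c]
      congr 1
      ext x
      simp only [Finset.filter_filter, mem_filter, mem_univ, true_and]
      tauto
    rw [← h1, h2]
  have := (Finset.sum_eq_sum_iff_of_le (fun i _ => hge i)).mp htot.symm j (mem_univ j)
  omega

open Finset in
lemma N_eq {t : Tableau n l} {s : Tabloid n l}
    (H : ∀ a b, t.col a = t.col b → s.1 a = s.1 b → a = b)
    (c : ℕ) (j : Fin l.length) :
    (univ.filter fun x => s.1 x = j ∧ t.col x = c).card
      = if c < l.get j then 1 else 0 := by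
  have hsplit := Finset.card_filter_add_card_filter_not
    (s := univ.filter fun x => s.1 x = j ∧ c ≤ t.col x) (p := fun x => t.col x = c)
  rw [Finset.filter_filter, Finset.filter_filter] at hsplit
  have e1 : ((univ : Finset (Fin n)).filter fun x => (s.1 x = j ∧ c ≤ t.col x) ∧ t.col x = c)
      = univ.filter fun x => s.1 x = j ∧ t.col x = c := by
    ext x; simp only [mem_filter, mem_univ, true_and]; omega
  have e2 : ((univ : Finset (Fin n)).filter fun x => (s.1 x = j ∧ c ≤ t.col x) ∧ ¬ t.col x = c)
      = univ.filter fun x => s.1 x = j ∧ (c + 1) ≤ t.col x := by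
    ext x; simp only [mem_filter, mem_univ, true_and]; omega
  rw [e1, e2, A_eq H (c+1) j, A_eq H c j] at hsplit
  split <;> omega

end Aux
section Aux2

open Finset

variable {n l}

lemma exists_pi {t : Tableau n l} {s : Tabloid n l}
    (H : ∀ a b, t.col a = t.col b → s.1 a = s.1 b → a = b) :
    ∃ π : Equiv.Perm (Fin n), π ∈ colStab n l t ∧ permTabloid n l π (rowOf n l t) = s := by
  have hf : Function.Injective (fun x => (s.1 x, t.col x)) := by
    intro a b hab
    simp only [Prod.mk.injEq] at hab
    exact H a b hab.2 hab.1
  have hsurj : ∀ x, ∃ y, (fun y => (t.row y, t.col y)) y = (fun x => (s.1 x, t.col x)) x := by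
    intro x
    have hcard : 0 < (univ.filter fun x' => s.1 x' = s.1 x ∧ t.col x' = t.col x).card := by
      apply Finset.card_pos.mpr
      exact ⟨x, by simp⟩
    rw [N_eq H] at hcard
    have hlt : t.col x < l.get (s.1 x) := by
      by_contra h
      rw [if_neg (by simpa using h)] at hcard
      exact lt_irrefl 0 hcard
    obtain ⟨y, hy1, hy2⟩ := exists_cell t hlt
    exact ⟨y, by simp [hy1, hy2]⟩
  obtain ⟨π', hπ'⟩ := exists_perm _ _ hf hsurj
  have hrow : ∀ x, t.row (π' x) = s.1 x := fun x => congrArg Prod.fst (hπ' x)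
  have hcol : ∀ x, t.col (π' x) = t.col x := fun x => congrArg Prod.snd (hπ' x)
  refine ⟨π'⁻¹, ?_, ?_⟩
  · rw [mem_colStab]
    intro v
    have := hcol (π'⁻¹ v)
    simpa using this.symm
  · apply Subtype.ext; funext i
    show t.row ((π'⁻¹)⁻¹ i) = s.1 i
    rw [inv_inv]
    exact hrow i

lemma polytabloid_rowOf (t : Tableau n l) : polytabloid n l t (rowOf n l t) = 1 := by
  unfold polytabloid
  rw [Finset.sum_apply]
  rw [Finset.sum_eq_single (1 : Equiv.Perm (Fin n))]
  · simp [permTabloid_one]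
  · intro σ hσ hne
    have hneq : permTabloid n l σ (rowOf n l t) ≠ rowOf n l t := by
      intro heq
      apply hne
      have hrow : ∀ i, t.row (σ⁻¹ i) = t.row i :=
        fun i => congrFun (congrArg Subtype.val heq) i
      have hcol := mem_colStab.mp hσ
      refine Equiv.ext fun v => ?_
      rw [Equiv.Perm.one_apply]
      have h1 : t.row (σ v) = t.row v := by
        have := hrow (σ v)
        simpa using this.symm
      exact t.posInj (show (fun x => (t.row x, t.col x)) (σ v)
          = (fun x => (t.row x, t.col x)) v by simp [h1, hcol v])
    simp [Pi.single_apply, hneq]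
  · intro h
    exact absurd (one_mem_colStab t) h

end Aux2
section Aux3

open Finset Equiv

variable {n l}

/-- The column antisymmetriser `κ_t = Σ_{σ ∈ C_t} sgn(σ)·σ` acting on `M^λ_ℤ`. -/
def kappaMap (t : Tableau n l) : (Tabloid n l → ℤ) →ₗ[ℤ] (Tabloid n l → ℤ) :=
  ∑ σ ∈ colStab n l t, (Equiv.Perm.sign σ : ℤ) • actYoung n l σ

lemma kappaMap_apply (t : Tableau n l) (x : Tabloid n l → ℤ) :
    kappaMap t x = ∑ σ ∈ colStab n l t, (Equiv.Perm.sign σ : ℤ) • actYoung n l σ x := by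
  simp [kappaMap, LinearMap.sum_apply, LinearMap.smul_apply]

lemma kappaMap_single (t : Tableau n l) (s : Tabloid n l) :
    ∃ z : ℤ, kappaMap t (Pi.single s 1) = z • polytabloid n l t := by
  have hform : kappaMap t (Pi.single s 1)
      = ∑ σ ∈ colStab n l t,
          (Equiv.Perm.sign σ : ℤ) • Pi.single (permTabloid n l σ s) (1 : ℤ) := by
    rw [kappaMap_apply]
    exact Finset.sum_congr rfl fun σ _ => by rw [actYoung_single]
  by_cases H : ∀ a b, t.col a = t.col b → s.1 a = s.1 b → a = b
  · obtain ⟨π, hπC, hπs⟩ := exists_pi H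
    refine ⟨(Equiv.Perm.sign π : ℤ), ?_⟩
    rw [hform]
    unfold polytabloid
    rw [Finset.smul_sum]
    refine Finset.sum_bij' (fun σ _ => σ * π) (fun ρ _ => ρ * π⁻¹)
      (fun σ hσ => mul_mem_colStab hσ hπC)
      (fun ρ hρ => mul_mem_colStab hρ (inv_mem_colStab hπC))
      (fun σ hσ => by group)
      (fun ρ hρ => by group)
      (fun σ hσ => ?_)
    have h1 : permTabloid n l σ s = permTabloid n l (σ * π) (rowOf n l t) := by
      rw [← hπs, permTabloid_mul]
    rw [h1, smul_smul]
    congr 1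
    have h2 : (Equiv.Perm.sign (σ * π) : ℤ) = (Equiv.Perm.sign σ : ℤ) * (Equiv.Perm.sign π : ℤ) := by
      rw [map_mul]; push_cast; ring
    rw [h2]
    have h3 : (Equiv.Perm.sign π : ℤ) * (Equiv.Perm.sign π : ℤ) = 1 := by
      rcases Int.units_eq_one_or (Equiv.Perm.sign π) with h | h <;> rw [h] <;> norm_num
    ring_nf
    rw [sq, h3, one_mul]
  · push_neg at H
    obtain ⟨a, b, hcol, hrow, hne⟩ := H
    refine ⟨0, ?_⟩
    rw [zero_smul, hform]
    have hswapfix : permTabloid n l (Equiv.swap a b) s = s := by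
      apply Subtype.ext; funext i
      show s.1 ((Equiv.swap a b)⁻¹ i) = s.1 i
      rw [Equiv.swap_inv]
      rcases eq_or_ne i a with rfl | hia
      · rw [Equiv.swap_apply_left]; exact hrow.symm
      rcases eq_or_ne i b with rfl | hib
      · rw [Equiv.swap_apply_right]; exact hrow
      · rw [Equiv.swap_apply_of_ne_of_ne hia hib]
    have hswapC : Equiv.swap a b ∈ colStab n l t := by
      rw [mem_colStab]
      intro v
      rcases eq_or_ne v a with rfl | hva
      · rw [Equiv.swap_apply_left]; exact hcol.symm
      rcases eq_or_ne v b with rfl | hvb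
      · rw [Equiv.swap_apply_right]; exact hcol
      · rw [Equiv.swap_apply_of_ne_of_ne hva hvb]
    apply Finset.sum_involution (fun σ _ => σ * Equiv.swap a b)
    · intro σ hσ
      have h1 : permTabloid n l (σ * Equiv.swap a b) s = permTabloid n l σ s := by
        rw [← permTabloid_mul, hswapfix]
      have h2 : (Equiv.Perm.sign (σ * Equiv.swap a b) : ℤ) = -(Equiv.Perm.sign σ : ℤ) := by
        rw [map_mul, Equiv.Perm.sign_swap hne]
        push_cast; ring
      rw [h1, h2, neg_smul]
      exact add_neg_cancel _
    · intro σ hσ _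
      intro heq
      apply hne
      have : Equiv.swap a b = 1 := by
        have := mul_left_cancel (a := σ) (by rw [heq, mul_one] : σ * Equiv.swap a b = σ * 1)
        exact this
      have := congrFun (congrArg (fun (e : Equiv.Perm (Fin n)) => (e : Fin n → Fin n)) this) a
      simpa [Equiv.swap_apply_left] using this.symm
    · intro σ hσ
      exact mul_mem_colStab hσ hswapC
    · intro σ hσ
      rw [mul_assoc, Equiv.swap_mul_self, mul_one]

end Aux3
section Aux4

open Finset

variable {n l}

lemma kappaMap_eq_smul (t : Tableau n l) (x : Tabloid n l → ℤ) :
    ∃ z : ℤ, kappaMap t x = z • polytabloid n l t := by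
  choose zf hzf using kappaMap_single t
  refine ⟨∑ s : Tabloid n l, x s * zf s, ?_⟩
  have hx : x = ∑ s : Tabloid n l, x s • Pi.single s (1 : ℤ) := by
    funext τ
    rw [Finset.sum_apply]
    simp [Pi.single_apply]
  conv_lhs => rw [hx]
  rw [map_sum]
  simp_rw [map_smul, hzf, smul_smul]
  rw [← Finset.sum_smul]

lemma inner_eval (t : Tableau n l) (x : Tabloid n l → ℤ) :
    (kappaMap t x) (rowOf n l t) = ∑ τ : Tabloid n l, x τ * polytabloid n l t τ := by
  have hL : (kappaMap t x) (rowOf n l t)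
      = ∑ σ ∈ colStab n l t,
          (Equiv.Perm.sign σ : ℤ) * x (permTabloid n l σ⁻¹ (rowOf n l t)) := by
    rw [kappaMap_apply, Finset.sum_apply]
    refine Finset.sum_congr rfl fun σ _ => ?_
    simp [actYoung, LinearMap.funLeft]
  have hR : ∑ τ : Tabloid n l, x τ * polytabloid n l t τ
      = ∑ σ ∈ colStab n l t,
          (Equiv.Perm.sign σ : ℤ) * x (permTabloid n l σ (rowOf n l t)) := by
    have key : ∀ τ : Tabloid n l, x τ * polytabloid n l t τ
        = ∑ σ ∈ colStab n l t,
          (Equiv.Perm.sign σ : ℤ) *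
            (x τ * (Pi.single (permTabloid n l σ (rowOf n l t)) (1 : ℤ) : Tabloid n l → ℤ) τ) := by
      intro τ
      unfold polytabloid
      rw [Finset.sum_apply, Finset.mul_sum]
      refine Finset.sum_congr rfl fun σ _ => ?_
      simp; ring
    rw [Finset.sum_congr rfl fun τ _ => key τ]
    rw [Finset.sum_comm]
    refine Finset.sum_congr rfl fun σ _ => ?_
    rw [← Finset.mul_sum]
    congr 1
    simp [Pi.single_apply, mul_ite]
  rw [hL, hR]
  refine Finset.sum_bij' (fun σ _ => σ⁻¹) (fun σ _ => σ⁻¹)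
    (fun σ hσ => inv_mem_colStab hσ) (fun σ hσ => inv_mem_colStab hσ)
    (fun σ _ => inv_inv σ) (fun σ _ => inv_inv σ) (fun σ hσ => ?_)
  rw [Equiv.Perm.sign_inv]

lemma kappa_inner (t : Tableau n l) (x : Tabloid n l → ℤ) :
    kappaMap t x = (∑ τ : Tabloid n l, x τ * polytabloid n l t τ) • polytabloid n l t := by
  obtain ⟨z, hz⟩ := kappaMap_eq_smul t x
  have heval : (z • polytabloid n l t) (rowOf n l t) = z := by
    rw [Pi.smul_apply, polytabloid_rowOf, smul_eq_mul, mul_one]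
  have hzval : z = ∑ τ : Tabloid n l, x τ * polytabloid n l t τ :=
    calc z = (z • polytabloid n l t) (rowOf n l t) := heval.symm
      _ = (kappaMap t x) (rowOf n l t) := by rw [hz]
      _ = _ := inner_eval t x
  rw [hz, hzval]

lemma polytabloid_transport (t t' : Tableau n l) :
    ∃ σ : Equiv.Perm (Fin n), actYoung n l σ (polytabloid n l t) = polytabloid n l t' := by
  have hsurj : ∀ x, ∃ y, (fun y => (t.row y, t.col y)) y
      = (fun x => (t'.row x, t'.col x)) x := by
    intro x
    obtain ⟨y, h1, h2⟩ := exists_cell t (t'.colLt x)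
    exact ⟨y, by simp [h1, h2]⟩
  obtain ⟨π, hπ⟩ := exists_perm _ _ t'.posInj hsurj
  have hrow : ∀ x, t.row (π x) = t'.row x := fun x => congrArg Prod.fst (hπ x)
  have hcol : ∀ x, t.col (π x) = t'.col x := fun x => congrArg Prod.snd (hπ x)
  have hcol' : ∀ w, t'.col (π⁻¹ w) = t.col w := by
    intro w
    have := hcol (π⁻¹ w)
    simpa using this.symm
  refine ⟨π⁻¹, ?_⟩
  have hrowOf : permTabloid n l π⁻¹ (rowOf n l t) = rowOf n l t' := by
    apply Subtype.ext; funext i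
    show t.row ((π⁻¹)⁻¹ i) = t'.row i
    rw [inv_inv]; exact hrow i
  unfold polytabloid
  rw [map_sum]
  simp_rw [map_smul, actYoung_single]
  refine Finset.sum_bij' (fun τ _ => π⁻¹ * τ * π) (fun ρ _ => π * ρ * π⁻¹)
    (fun τ hτ => ?_) (fun ρ hρ => ?_) (fun τ _ => by group) (fun ρ _ => by group)
    (fun τ hτ => ?_)
  · rw [mem_colStab] at *
    intro v
    show t'.col (π⁻¹ (τ (π v))) = t'.col v
    rw [hcol', hτ, ← hcol' (π v)]
    simp
  · rw [mem_colStab] at *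
    intro v
    show t.col (π (ρ (π⁻¹ v))) = t.col v
    rw [hcol, hρ, ← hcol (π⁻¹ v)]
    simp
  · have hsign : (Equiv.Perm.sign (π⁻¹ * τ * π) : ℤ) = (Equiv.Perm.sign τ : ℤ) := by
      rw [map_mul, map_mul, Equiv.Perm.sign_inv]
      push_cast
      have h3 : (Equiv.Perm.sign π : ℤ) * (Equiv.Perm.sign π : ℤ) = 1 := by
        rcases Int.units_eq_one_or (Equiv.Perm.sign π) with h | h <;> rw [h] <;> norm_num
      linear_combination (Equiv.Perm.sign τ : ℤ) * h3
    have harg : permTabloid n l π⁻¹ (permTabloid n l τ (rowOf n l t))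
        = permTabloid n l (π⁻¹ * τ * π) (rowOf n l t') := by
      rw [← hrowOf, permTabloid_mul, permTabloid_mul]
      congr 1
      group
    rw [hsign, harg]

end Aux4
/-- **Integral Submodule Theorem.**  Let `λ` (given by the decreasing list `l` of positive row
lengths summing to `n`) be a partition of `n`, and let `M^λ_ℤ` be the integral Young permutation
module on `λ`-tabloids with its standard basis and associated `𝔖_n`-invariant bilinear form.  If
`U` is a `ℤ𝔖_n`-submodule of `M^λ_ℤ` with `U ⊄ (S^λ_ℤ)^⊥`, then there is a positive integer `m`
with `m·S^λ_ℤ ⊆ U`. -/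
theorem integral_submodule_theorem (hsum : l.sum = n)
    (hpos : ∀ a ∈ l, 0 < a) (hsort : List.Pairwise (· ≥ ·) l)
    (U : Submodule ℤ (Tabloid n l → ℤ))
    (hUinv : ∀ (σ : Equiv.Perm (Fin n)), ∀ x ∈ U, actYoung n l σ x ∈ U)
    (hUperp : ¬ (∀ x ∈ U, ∀ y ∈ Specht n l, (∑ τ : Tabloid n l, x τ * y τ) = 0)) :
    ∃ m : ℕ, 0 < m ∧ ∀ y ∈ Specht n l, (m : ℤ) • y ∈ U := by
  push_neg at hUperp
  obtain ⟨x, hxU, y, hyS, hxy⟩ := hUperp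
  -- find a tableau with nonzero pairing
  have hex : ∃ t : Tableau n l, (∑ τ : Tabloid n l, x τ * polytabloid n l t τ) ≠ 0 := by
    by_contra h
    push_neg at h
    apply hxy
    let φ : (Tabloid n l → ℤ) →ₗ[ℤ] ℤ :=
      ∑ τ : Tabloid n l, (x τ) • LinearMap.proj τ
    have hφ : ∀ w : Tabloid n l → ℤ, φ w = ∑ τ : Tabloid n l, x τ * w τ := by
      intro w
      simp [φ, LinearMap.sum_apply, LinearMap.smul_apply, LinearMap.proj_apply]
    have hker : Specht n l ≤ LinearMap.ker φ := by
      rw [Specht, Submodule.span_le]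
      rintro _ ⟨t, rfl⟩
      rw [SetLike.mem_coe, LinearMap.mem_ker, hφ]
      exact h t
    have := hker hyS
    rw [LinearMap.mem_ker, hφ] at this
    exact this
  obtain ⟨t, hc⟩ := hex
  set c : ℤ := ∑ τ : Tabloid n l, x τ * polytabloid n l t τ with hcdef
  have hKU : kappaMap t x ∈ U := by
    rw [kappaMap_apply]
    exact Submodule.sum_mem _ fun σ _ => Submodule.smul_mem _ _ (hUinv σ x hxU)
  rw [kappa_inner] at hKU
  -- c • e_t ∈ U, transport to all polytabloids
  have hall : ∀ t' : Tableau n l, c • polytabloid n l t' ∈ U := by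
    intro t'
    obtain ⟨σ, hσ⟩ := polytabloid_transport t t'
    rw [← hσ, ← map_smul]
    exact hUinv σ _ hKU
  refine ⟨c.natAbs, Int.natAbs_pos.mpr hc, ?_⟩
  intro y' hy'
  have hcy : c • y' ∈ U := by
    have hle : Specht n l ≤ Submodule.comap
        (c • (LinearMap.id : (Tabloid n l → ℤ) →ₗ[ℤ] (Tabloid n l → ℤ))) U := by
      rw [Specht, Submodule.span_le]
      rintro _ ⟨t', rfl⟩
      rw [SetLike.mem_coe, Submodule.mem_comap, LinearMap.smul_apply, LinearMap.id_apply]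
      exact hall t'
    have := hle hy'
    rw [Submodule.mem_comap, LinearMap.smul_apply, LinearMap.id_apply] at this
    exact this
  rcases Int.natAbs_eq c with h | h
  · rw [← h]; exact hcy
  · have h' : (c.natAbs : ℤ) = -c := by omega
    rw [h', neg_smul]
    exact Submodule.neg_mem _ hcy

end
end
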